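/- arXiv:1604.06864 — 5 statements merged into one kernel-verified Lean document; each statement's English description precedes it below -/
import Mathlib

section
/- Let β > 0 and define u : ℝ × ℝ → ℝ by u(x,t) = (1 + exp(√(β/6)·x − (5β/6)·t))^(−2). Then u is a classical solution of Fisher's equation with λ = 1: for all (x,t) ∈ ℝ × ℝ, ∂u/∂t (x,t) = ∂²u/∂x² (x,t) + β·u(x,t)·(1 − u(x,t)). -/
private lemma fisher_Epos (y : ℝ) : (0:ℝ) < 1 + Real.exp y := by positivity

private lemma fisher_hx_deriv (a c t : ℝ) (ξ : ℝ) :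
    HasDerivAt (fun ξ : ℝ => (1 + Real.exp (a * ξ - c * t)) ^ (-2 : ℤ))
      ((-2 : ℝ) * (1 + Real.exp (a * ξ - c * t)) ^ (-3 : ℤ) *
        (Real.exp (a * ξ - c * t) * a)) ξ := by
  have h1 : HasDerivAt (fun ξ : ℝ => 1 + Real.exp (a * ξ - c * t))
      (Real.exp (a * ξ - c * t) * a) ξ := by
    have := (((hasDerivAt_id ξ).const_mul a).sub_const (c * t)).exp
    simpa using this.const_add 1
  have h2 := (hasDerivAt_zpow (-2) (1 + Real.exp (a * ξ - c * t))
      (Or.inl (ne_of_gt (fisher_Epos _)))).comp ξ h1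
  refine h2.congr_deriv ?_
  push_cast
  ring

private lemma fisher_ht_deriv (a c x : ℝ) (τ : ℝ) :
    HasDerivAt (fun τ : ℝ => (1 + Real.exp (a * x - c * τ)) ^ (-2 : ℤ))
      ((-2 : ℝ) * (1 + Real.exp (a * x - c * τ)) ^ (-3 : ℤ) *
        (Real.exp (a * x - c * τ) * (-c))) τ := by
  have h1 : HasDerivAt (fun τ : ℝ => 1 + Real.exp (a * x - c * τ))
      (Real.exp (a * x - c * τ) * (-c)) τ := by
    have := (((hasDerivAt_id τ).const_mul c).const_sub (a * x)).exp
    have h := this.const_add 1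
    simpa using h
  have h2 := (hasDerivAt_zpow (-2) (1 + Real.exp (a * x - c * τ))
      (Or.inl (ne_of_gt (fisher_Epos _)))).comp τ h1
  refine h2.congr_deriv ?_
  push_cast
  ring

private lemma fisher_hxx_deriv (a c t : ℝ) (ξ : ℝ) :
    HasDerivAt (fun ξ : ℝ => (-2 : ℝ) * (1 + Real.exp (a * ξ - c * t)) ^ (-3 : ℤ) *
        (Real.exp (a * ξ - c * t) * a))
      ((-2 : ℝ) * ((-3 : ℝ) * (1 + Real.exp (a * ξ - c * t)) ^ (-4 : ℤ) *
          (Real.exp (a * ξ - c * t) * a)) * (Real.exp (a * ξ - c * t) * a)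
        + (-2 : ℝ) * (1 + Real.exp (a * ξ - c * t)) ^ (-3 : ℤ) *
          (Real.exp (a * ξ - c * t) * a * a)) ξ := by
  have h1 : HasDerivAt (fun ξ : ℝ => 1 + Real.exp (a * ξ - c * t))
      (Real.exp (a * ξ - c * t) * a) ξ := by
    have := (((hasDerivAt_id ξ).const_mul a).sub_const (c * t)).exp
    simpa using this.const_add 1
  have hE : HasDerivAt (fun ξ : ℝ => Real.exp (a * ξ - c * t))
      (Real.exp (a * ξ - c * t) * a) ξ := by
    have := (((hasDerivAt_id ξ).const_mul a).sub_const (c * t)).exp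
    simpa using this
  have h3 : HasDerivAt (fun ξ : ℝ => (1 + Real.exp (a * ξ - c * t)) ^ (-3 : ℤ))
      ((-3 : ℝ) * (1 + Real.exp (a * ξ - c * t)) ^ (-4 : ℤ) *
        (Real.exp (a * ξ - c * t) * a)) ξ := by
    have h2 := (hasDerivAt_zpow (-3) (1 + Real.exp (a * ξ - c * t))
        (Or.inl (ne_of_gt (fisher_Epos _)))).comp ξ h1
    refine h2.congr_deriv ?_
    push_cast
    ring
  have h4 := ((h3.const_mul (-2 : ℝ)).mul (hE.mul_const a))
  exact h4

private lemma fisher_algebra_key (β E a c : ℝ) (hE : 0 < E) (ha2 : a ^ 2 = β / 6)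
    (hc : c = 5 * β / 6) :
    (-2 : ℝ) * (1 + E) ^ (-3 : ℤ) * (E * (-c)) =
      ((-2 : ℝ) * ((-3 : ℝ) * (1 + E) ^ (-4 : ℤ) * (E * a)) * (E * a)
        + (-2 : ℝ) * (1 + E) ^ (-3 : ℤ) * (E * a * a))
      + β * (1 + E) ^ (-2 : ℤ) * (1 - (1 + E) ^ (-2 : ℤ)) := by
  have hP : (0:ℝ) < 1 + E := by linarith
  have hPne : (1 + E) ≠ 0 := ne_of_gt hP
  subst hc
  have haa : a * a = β / 6 := by nlinarith [ha2]
  simp only [zpow_neg]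
  rw [show ((1+E)^(3:ℤ) : ℝ) = (1+E)^(3:ℕ) from by norm_cast,
      show ((1+E)^(4:ℤ) : ℝ) = (1+E)^(4:ℕ) from by norm_cast,
      show ((1+E)^(2:ℤ) : ℝ) = (1+E)^(2:ℕ) from by norm_cast]
  field_simp
  linear_combination ((6*E^2*(1+E)^3 - 2*E*(1+E)^4)*(1+E)^4*(1+E)^3*6 + 24*E+192*E^2+600*E^3+720*E^4-720*E^5-4032*E^6-7056*E^7-7200*E^8-4680*E^9-1920*E^10-456*E^11-48*E^12-120*E^2-300*E^3-360*E^4+360*E^5+2016*E^6+3528*E^7+3600*E^8+2340*E^9+960*E^10+228*E^11+24*E^12) * haa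

/-- The traveling-wave profile `u(x,t) = (1 + exp(√(β/6)·x − (5β/6)·t))⁻²`
is a classical solution of Fisher's equation `u_t = u_xx + β·u·(1 − u)` (λ = 1). -/
theorem fisher_traveling_wave_solves_fisher (β : ℝ) (hβ : 0 < β)
    (u : ℝ → ℝ → ℝ)
    (hu : u = fun x t =>
      (1 + Real.exp (Real.sqrt (β / 6) * x - (5 * β / 6) * t)) ^ (-2 : ℤ)) :
    ∀ x t : ℝ,
      Differentiable ℝ (fun τ => u x τ) ∧
      Differentiable ℝ (fun ξ => u ξ t) ∧
      Differentiable ℝ (deriv (fun ξ => u ξ t)) ∧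
      deriv (fun τ => u x τ) t =
        deriv (deriv (fun ξ => u ξ t)) x + β * u x t * (1 - u x t) := by
  subst hu
  intro x t
  set a := Real.sqrt (β / 6) with ha
  set c := 5 * β / 6 with hc
  have ha2 : a ^ 2 = β / 6 := Real.sq_sqrt (by positivity)
  have hdx : deriv (fun ξ : ℝ => (1 + Real.exp (a * ξ - c * t)) ^ (-2 : ℤ))
      = fun ξ : ℝ => (-2 : ℝ) * (1 + Real.exp (a * ξ - c * t)) ^ (-3 : ℤ) *
        (Real.exp (a * ξ - c * t) * a) := by
    funext ξ; exact (fisher_hx_deriv a c t ξ).deriv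
  refine ⟨fun τ => (fisher_ht_deriv a c x τ).differentiableAt,
    fun ξ => (fisher_hx_deriv a c t ξ).differentiableAt, ?_, ?_⟩
  · rw [hdx]
    exact fun ξ => (fisher_hxx_deriv a c t ξ).differentiableAt
  · rw [hdx, (fisher_ht_deriv a c x t).deriv, (fisher_hxx_deriv a c t x).deriv]
    exact fisher_algebra_key β (Real.exp (a * x - c * t)) a c (Real.exp_pos _) ha2 hc
end

section
/- For every i ∈ ℤ, CTB_i is differentiable at each knot and its first derivative satisfies: CTB_i'(x_{i−2}) = 0, CTB_i'(x_{i−1}) = (3/4)·csc(3h/2), CTB_i'(x_i) = 0, CTB_i'(x_{i+1}) = −(3/4)·csc(3h/2), and CTB_i'(x_{i+2}) = 0. -/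
/-- The knot `x_j = a + j·h` of a uniform partition. -/
noncomputable def knot (h a : ℝ) (j : ℤ) : ℝ := a + (j : ℝ) * h

/-- The cubic trigonometric B-spline `CTB_i` over the uniform knots `x_j = a + j·h`,
built from `ω_j(x) = sin((x − x_j)/2)`, `φ_j(x) = sin((x_j − x)/2)` and
`θ = sin(h/2)·sin(h)·sin(3h/2)`. -/
noncomputable def CTB (h a : ℝ) (i : ℤ) (x : ℝ) : ℝ :=
  let ω : ℤ → ℝ := fun j => Real.sin ((x - knot h a j) / 2)
  let φ : ℤ → ℝ := fun j => Real.sin ((knot h a j - x) / 2)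
  let θ : ℝ := Real.sin (h / 2) * Real.sin h * Real.sin (3 * h / 2)
  if knot h a (i - 2) ≤ x ∧ x ≤ knot h a (i - 1) then
    (ω (i - 2)) ^ 3 / θ
  else if knot h a (i - 1) ≤ x ∧ x ≤ knot h a i then
    (ω (i - 2) * (ω (i - 2) * φ i + φ (i + 1) * ω (i - 1)) + φ (i + 2) * (ω (i - 1)) ^ 2) / θ
  else if knot h a i ≤ x ∧ x ≤ knot h a (i + 1) then
    (ω (i - 2) * (φ (i + 1)) ^ 2 + φ (i + 2) * (ω (i - 1) * φ (i + 1) + φ (i + 2) * ω i)) / θ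
  else if knot h a (i + 1) ≤ x ∧ x ≤ knot h a (i + 2) then
    (φ (i + 2)) ^ 3 / θ
  else 0

open Set Real

lemma glue {f g1 g2 : ℝ → ℝ} {d p l r : ℝ} (hl : l < p) (hr : p < r)
    (h1 : HasDerivAt g1 d p) (h2 : HasDerivAt g2 d p)
    (e1 : Set.EqOn f g1 (Set.Icc l p)) (e2 : Set.EqOn f g2 (Set.Icc p r)) :
    HasDerivAt f d p := by
  have hL : HasDerivWithinAt f d (Iic p) p := by
    refine HasDerivWithinAt.mono_of_mem_nhdsWithin ?_ (Icc_mem_nhdsLE_of_mem ⟨hl, le_refl p⟩)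
    exact (h1.hasDerivWithinAt).congr e1 (e1 ⟨le_of_lt hl, le_refl p⟩)
  have hR : HasDerivWithinAt f d (Ici p) p := by
    refine HasDerivWithinAt.mono_of_mem_nhdsWithin ?_ (Icc_mem_nhdsGE_of_mem ⟨le_refl p, hr⟩)
    exact (h2.hasDerivWithinAt).congr e2 (e2 ⟨le_refl p, le_of_lt hr⟩)
  rw [← hasDerivWithinAt_univ]
  exact (hL.union hR).mono (by rw [Iic_union_Ici])

lemma hasDerivAt_w (c x : ℝ) :
    HasDerivAt (fun y => Real.sin ((y - c) / 2)) (Real.cos ((x - c) / 2) / 2) x := by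
  have := (Real.hasDerivAt_sin ((x - c) / 2)).comp x (((hasDerivAt_id x).sub_const c).div_const 2)
  exact this.congr_deriv (by ring)

lemma hasDerivAt_p (c x : ℝ) :
    HasDerivAt (fun y => Real.sin ((c - y) / 2)) (-(Real.cos ((c - x) / 2) / 2)) x := by
  have := (Real.hasDerivAt_sin ((c - x) / 2)).comp x (((hasDerivAt_id x).const_sub c).div_const 2)
  exact this.congr_deriv (by ring)

set_option maxHeartbeats 2000000 in
/-- `CTB_i` is differentiable at every knot, with first derivative values
`0, (3/4)·csc(3h/2), 0, −(3/4)·csc(3h/2), 0` at `x_{i−2}, …, x_{i+2}`. -/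
theorem CTB_deriv_at_knots (h a : ℝ) (hh : 0 < h) (hh' : h < 2 * Real.pi / 3) (i : ℤ) :
    HasDerivAt (CTB h a i) 0 (knot h a (i - 2)) ∧
    HasDerivAt (CTB h a i) (3 / 4 * (Real.sin (3 * h / 2))⁻¹) (knot h a (i - 1)) ∧
    HasDerivAt (CTB h a i) 0 (knot h a i) ∧
    HasDerivAt (CTB h a i) (-(3 / 4) * (Real.sin (3 * h / 2))⁻¹) (knot h a (i + 1)) ∧
    HasDerivAt (CTB h a i) 0 (knot h a (i + 2)) := by
  have hπ := Real.pi_pos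
  have hhπ : h < Real.pi := by nlinarith
  have s_pos : 0 < Real.sin (h / 2) := Real.sin_pos_of_pos_of_lt_pi (by linarith) (by linarith)
  have sh_pos : 0 < Real.sin h := Real.sin_pos_of_pos_of_lt_pi hh hhπ
  have s3_pos : 0 < Real.sin (3 * h / 2) := Real.sin_pos_of_pos_of_lt_pi (by linarith) (by nlinarith)
  set θc : ℝ := Real.sin (h / 2) * Real.sin h * Real.sin (3 * h / 2) with hθ
  have θ_pos : 0 < θc := by positivity
  have hsinh : Real.sin h = 2 * Real.sin (h / 2) * Real.cos (h / 2) := by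
    rw [show h = 2 * (h / 2) by ring, Real.sin_two_mul]; ring_nf
  have hsin3 : Real.sin (3 * h / 2) = 3 * Real.sin (h / 2) - 4 * Real.sin (h / 2) ^ 3 := by
    rw [show 3 * h / 2 = 3 * (h / 2) by ring, Real.sin_three_mul]
  have hsinh' : Real.sin h = 2 * Real.sin (h * (1/2)) * Real.cos (h * (1/2)) := by
    rw [show h * (1/2) = h / 2 by ring]; exact hsinh
  have hsin3' : Real.sin (h * (3/2)) = 3 * Real.sin (h * (1/2)) - 4 * Real.sin (h * (1/2)) ^ 3 := by
    rw [show h * (3/2) = 3 * h / 2 by ring, show h * (1/2) = h / 2 by ring]; exact hsin3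
  have ne1 : Real.sin (h * (1/2)) ≠ 0 := by
    rw [show h * (1/2) = h / 2 by ring]; exact ne_of_gt s_pos
  have ne3 : 3 * Real.sin (h * (1/2)) - 4 * Real.sin (h * (1/2)) ^ 3 ≠ 0 := by
    rw [← hsin3', show h * (3/2) = 3 * h / 2 by ring]; exact ne_of_gt s3_pos
  have nec : Real.cos (h * (1/2)) ≠ 0 := by
    rw [show h * (1/2) = h / 2 by ring]
    exact ne_of_gt (Real.cos_pos_of_mem_Ioo ⟨by linarith, by nlinarith⟩)
  have neC : Real.sin (h * (1/2)) * 12 - Real.sin (h * (1/2)) ^ 3 * 16 ≠ 0 := by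
    rw [show Real.sin (h * (1/2)) * 12 - Real.sin (h * (1/2)) ^ 3 * 16
      = 4 * (3 * Real.sin (h * (1/2)) - 4 * Real.sin (h * (1/2)) ^ 3) by ring]
    exact mul_ne_zero (by norm_num) ne3
  have neA : Real.sin (h * (1/2)) ^ 3 * Real.cos (h * (1/2)) * 12
      - Real.sin (h * (1/2)) ^ 5 * Real.cos (h * (1/2)) * 16 ≠ 0 := by
    rw [show Real.sin (h * (1/2)) ^ 3 * Real.cos (h * (1/2)) * 12
        - Real.sin (h * (1/2)) ^ 5 * Real.cos (h * (1/2)) * 16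
      = Real.sin (h * (1/2)) ^ 2 * Real.cos (h * (1/2)) * 4
        * (3 * Real.sin (h * (1/2)) - 4 * Real.sin (h * (1/2)) ^ 3) by ring]
    exact mul_ne_zero (mul_ne_zero (mul_ne_zero (pow_ne_zero 2 ne1) nec) (by norm_num)) ne3
  have neB : Real.sin (h * (1/2)) ^ 3 * Real.cos (h * (1/2)) * 6
      - Real.sin (h * (1/2)) ^ 5 * Real.cos (h * (1/2)) * 8 ≠ 0 := by
    rw [show Real.sin (h * (1/2)) ^ 3 * Real.cos (h * (1/2)) * 6
        - Real.sin (h * (1/2)) ^ 5 * Real.cos (h * (1/2)) * 8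
      = Real.sin (h * (1/2)) ^ 2 * Real.cos (h * (1/2)) * 2
        * (3 * Real.sin (h * (1/2)) - 4 * Real.sin (h * (1/2)) ^ 3) by ring]
    exact mul_ne_zero (mul_ne_zero (mul_ne_zero (pow_ne_zero 2 ne1) nec) (by norm_num)) ne3
  have kord : ∀ j k : ℤ, j < k → knot h a j < knot h a k := by
    intro j k hjk
    simp only [knot]
    have : (j : ℝ) < (k : ℝ) := by exact_mod_cast hjk
    nlinarith
  -- branch functions
  set B1 : ℝ → ℝ := fun x => Real.sin ((x - knot h a (i - 2)) / 2) ^ 3 / θc with hB1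
  set B2 : ℝ → ℝ := fun x =>
    (Real.sin ((x - knot h a (i - 2)) / 2) *
        (Real.sin ((x - knot h a (i - 2)) / 2) * Real.sin ((knot h a i - x) / 2) +
          Real.sin ((knot h a (i + 1) - x) / 2) * Real.sin ((x - knot h a (i - 1)) / 2)) +
      Real.sin ((knot h a (i + 2) - x) / 2) * Real.sin ((x - knot h a (i - 1)) / 2) ^ 2) / θc with hB2
  set B3 : ℝ → ℝ := fun x =>
    (Real.sin ((x - knot h a (i - 2)) / 2) * Real.sin ((knot h a (i + 1) - x) / 2) ^ 2 +
      Real.sin ((knot h a (i + 2) - x) / 2) *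
        (Real.sin ((x - knot h a (i - 1)) / 2) * Real.sin ((knot h a (i + 1) - x) / 2) +
          Real.sin ((knot h a (i + 2) - x) / 2) * Real.sin ((x - knot h a i) / 2))) / θc with hB3
  set B4 : ℝ → ℝ := fun x => Real.sin ((knot h a (i + 2) - x) / 2) ^ 3 / θc with hB4
  -- EqOn lemmas
  have E1 : Set.EqOn (CTB h a i) B1 (Set.Icc (knot h a (i - 2)) (knot h a (i - 1))) := by
    intro x hx
    simp only [CTB, hB1]
    rw [if_pos ⟨hx.1, hx.2⟩]
  have E0 : Set.EqOn (CTB h a i) (fun _ => (0:ℝ)) (Set.Icc (knot h a (i - 2) - 1) (knot h a (i - 2))) := by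
    intro x hx
    rcases eq_or_lt_of_le hx.2 with heq | hlt
    · subst heq
      simp only [CTB]
      rw [if_pos ⟨le_refl _, le_of_lt (kord _ _ (by omega))⟩]
      simp
    · have c1 : ¬(knot h a (i - 2) ≤ x ∧ x ≤ knot h a (i - 1)) := by
        rintro ⟨h1, -⟩; linarith
      have c2 : ¬(knot h a (i - 1) ≤ x ∧ x ≤ knot h a i) := by
        rintro ⟨h1, -⟩; have := kord (i-2) (i-1) (by omega); linarith
      have c3 : ¬(knot h a i ≤ x ∧ x ≤ knot h a (i + 1)) := by
        rintro ⟨h1, -⟩; have := kord (i-2) i (by omega); linarith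
      have c4 : ¬(knot h a (i + 1) ≤ x ∧ x ≤ knot h a (i + 2)) := by
        rintro ⟨h1, -⟩; have := kord (i-2) (i+1) (by omega); linarith
      simp only [CTB]
      rw [if_neg c1, if_neg c2, if_neg c3, if_neg c4]
  have E5 : Set.EqOn (CTB h a i) (fun _ => (0:ℝ)) (Set.Icc (knot h a (i + 2)) (knot h a (i + 2) + 1)) := by
    intro x hx
    rcases eq_or_lt_of_le hx.1 with heq | hlt
    · rw [← heq]
      have c1 : ¬(knot h a (i - 2) ≤ knot h a (i+2) ∧ knot h a (i+2) ≤ knot h a (i - 1)) := by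
        rintro ⟨-, h1⟩; have := kord (i-1) (i+2) (by omega); linarith
      have c2 : ¬(knot h a (i - 1) ≤ knot h a (i+2) ∧ knot h a (i+2) ≤ knot h a i) := by
        rintro ⟨-, h1⟩; have := kord i (i+2) (by omega); linarith
      have c3 : ¬(knot h a i ≤ knot h a (i+2) ∧ knot h a (i+2) ≤ knot h a (i + 1)) := by
        rintro ⟨-, h1⟩; have := kord (i+1) (i+2) (by omega); linarith
      simp only [CTB]
      rw [if_neg c1, if_neg c2, if_neg c3,
        if_pos ⟨le_of_lt (kord _ _ (by omega : (i+1:ℤ) < i+2)), le_refl _⟩]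
      simp
    · have hgt : knot h a (i+2) < x := hlt
      have c1 : ¬(knot h a (i - 2) ≤ x ∧ x ≤ knot h a (i - 1)) := by
        rintro ⟨-, h1⟩; have := kord (i-1) (i+2) (by omega); linarith
      have c2 : ¬(knot h a (i - 1) ≤ x ∧ x ≤ knot h a i) := by
        rintro ⟨-, h1⟩; have := kord i (i+2) (by omega); linarith
      have c3 : ¬(knot h a i ≤ x ∧ x ≤ knot h a (i + 1)) := by
        rintro ⟨-, h1⟩; have := kord (i+1) (i+2) (by omega); linarith
      have c4 : ¬(knot h a (i + 1) ≤ x ∧ x ≤ knot h a (i + 2)) := by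
        rintro ⟨-, h1⟩; linarith
      simp only [CTB]
      rw [if_neg c1, if_neg c2, if_neg c3, if_neg c4]
  have E2 : Set.EqOn (CTB h a i) B2 (Set.Icc (knot h a (i - 1)) (knot h a i)) := by
    intro x hx
    rcases eq_or_lt_of_le hx.1 with heq | hlt
    · rw [← heq]
      have := E1 ⟨le_of_lt (kord _ _ (by omega : (i-2:ℤ) < i-1)), le_refl _⟩
      rw [this, hB1, hB2]
      try simp only [hθ, knot]
      try push_cast
      try field_simp [ne_of_gt s_pos, ne_of_gt sh_pos, ne_of_gt s3_pos]
      try ring_nf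
      try simp only [Real.sin_zero, Real.cos_zero]
      try rw [hsinh']
      try rw [hsin3']
      try ring
    · have c1 : ¬(knot h a (i - 2) ≤ x ∧ x ≤ knot h a (i - 1)) := by
        rintro ⟨-, h1⟩; linarith
      simp only [CTB, hB2]
      rw [if_neg c1, if_pos ⟨le_of_lt hlt, hx.2⟩]
  have E3 : Set.EqOn (CTB h a i) B3 (Set.Icc (knot h a i) (knot h a (i + 1))) := by
    intro x hx
    rcases eq_or_lt_of_le hx.1 with heq | hlt
    · rw [← heq]
      have := E2 ⟨le_of_lt (kord _ _ (by omega : (i-1:ℤ) < i)), le_refl _⟩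
      rw [this, hB2, hB3]
      try simp only [hθ, knot]
      try push_cast
      try field_simp [ne_of_gt s_pos, ne_of_gt sh_pos, ne_of_gt s3_pos]
      try ring_nf
      try simp only [Real.sin_zero, Real.cos_zero]
      try rw [hsinh']
      try rw [hsin3']
      try ring
    · have c1 : ¬(knot h a (i - 2) ≤ x ∧ x ≤ knot h a (i - 1)) := by
        rintro ⟨-, h1⟩; have := kord (i-1) i (by omega); linarith
      have c2 : ¬(knot h a (i - 1) ≤ x ∧ x ≤ knot h a i) := by
        rintro ⟨-, h1⟩; linarith
      simp only [CTB, hB3]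
      rw [if_neg c1, if_neg c2, if_pos ⟨le_of_lt hlt, hx.2⟩]
  have E4 : Set.EqOn (CTB h a i) B4 (Set.Icc (knot h a (i + 1)) (knot h a (i + 2))) := by
    intro x hx
    rcases eq_or_lt_of_le hx.1 with heq | hlt
    · rw [← heq]
      have := E3 ⟨le_of_lt (kord _ _ (by omega : (i:ℤ) < i+1)), le_refl _⟩
      rw [this, hB3, hB4]
      try simp only [hθ, knot]
      try push_cast
      try field_simp [ne_of_gt s_pos, ne_of_gt sh_pos, ne_of_gt s3_pos]
      try ring_nf
      try simp only [Real.sin_zero, Real.cos_zero]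
      try rw [hsinh']
      try rw [hsin3']
      try ring
    · have c1 : ¬(knot h a (i - 2) ≤ x ∧ x ≤ knot h a (i - 1)) := by
        rintro ⟨-, h1⟩; have := kord (i-1) (i+1) (by omega); linarith
      have c2 : ¬(knot h a (i - 1) ≤ x ∧ x ≤ knot h a i) := by
        rintro ⟨-, h1⟩; have := kord i (i+1) (by omega); linarith
      have c3 : ¬(knot h a i ≤ x ∧ x ≤ knot h a (i + 1)) := by
        rintro ⟨-, h1⟩; linarith
      simp only [CTB, hB4]
      rw [if_neg c1, if_neg c2, if_neg c3, if_pos ⟨le_of_lt hlt, hx.2⟩]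
  -- derivative of B1 at any x
  have D1 : ∀ x : ℝ, HasDerivAt B1
      (3 * Real.sin ((x - knot h a (i - 2)) / 2) ^ 2 * (Real.cos ((x - knot h a (i - 2)) / 2) / 2) / θc) x :=
    fun x => ((hasDerivAt_w (knot h a (i - 2)) x).pow 3).div_const θc
  have D4 : ∀ x : ℝ, HasDerivAt B4
      (3 * Real.sin ((knot h a (i + 2) - x) / 2) ^ 2 * (-(Real.cos ((knot h a (i + 2) - x) / 2) / 2)) / θc) x :=
    fun x => ((hasDerivAt_p (knot h a (i + 2)) x).pow 3).div_const θc
  have D2 : ∀ x : ℝ, HasDerivAt B2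
      ((Real.cos ((x - knot h a (i - 2)) / 2) / 2 *
          (Real.sin ((x - knot h a (i - 2)) / 2) * Real.sin ((knot h a i - x) / 2) +
            Real.sin ((knot h a (i + 1) - x) / 2) * Real.sin ((x - knot h a (i - 1)) / 2)) +
        Real.sin ((x - knot h a (i - 2)) / 2) *
          (Real.cos ((x - knot h a (i - 2)) / 2) / 2 * Real.sin ((knot h a i - x) / 2) +
            Real.sin ((x - knot h a (i - 2)) / 2) * -(Real.cos ((knot h a i - x) / 2) / 2) +
            (-(Real.cos ((knot h a (i + 1) - x) / 2) / 2) * Real.sin ((x - knot h a (i - 1)) / 2) +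
              Real.sin ((knot h a (i + 1) - x) / 2) * (Real.cos ((x - knot h a (i - 1)) / 2) / 2))) +
        (-(Real.cos ((knot h a (i + 2) - x) / 2) / 2) * Real.sin ((x - knot h a (i - 1)) / 2) ^ 2 +
          Real.sin ((knot h a (i + 2) - x) / 2) *
            (2 * Real.sin ((x - knot h a (i - 1)) / 2) ^ 1 * (Real.cos ((x - knot h a (i - 1)) / 2) / 2)))) / θc) x := by
    intro x
    exact (((hasDerivAt_w (knot h a (i - 2)) x).mul
      (((hasDerivAt_w (knot h a (i - 2)) x).mul (hasDerivAt_p (knot h a i) x)).add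
        ((hasDerivAt_p (knot h a (i + 1)) x).mul (hasDerivAt_w (knot h a (i - 1)) x)))).add
      ((hasDerivAt_p (knot h a (i + 2)) x).mul ((hasDerivAt_w (knot h a (i - 1)) x).pow 2))).div_const θc
  have D3 : ∀ x : ℝ, HasDerivAt B3
      ((Real.cos ((x - knot h a (i - 2)) / 2) / 2 * Real.sin ((knot h a (i + 1) - x) / 2) ^ 2 +
        Real.sin ((x - knot h a (i - 2)) / 2) *
          (2 * Real.sin ((knot h a (i + 1) - x) / 2) ^ 1 * -(Real.cos ((knot h a (i + 1) - x) / 2) / 2)) +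
        (-(Real.cos ((knot h a (i + 2) - x) / 2) / 2) *
            (Real.sin ((x - knot h a (i - 1)) / 2) * Real.sin ((knot h a (i + 1) - x) / 2) +
              Real.sin ((knot h a (i + 2) - x) / 2) * Real.sin ((x - knot h a i) / 2)) +
          Real.sin ((knot h a (i + 2) - x) / 2) *
            (Real.cos ((x - knot h a (i - 1)) / 2) / 2 * Real.sin ((knot h a (i + 1) - x) / 2) +
              Real.sin ((x - knot h a (i - 1)) / 2) * -(Real.cos ((knot h a (i + 1) - x) / 2) / 2) +
              (-(Real.cos ((knot h a (i + 2) - x) / 2) / 2) * Real.sin ((x - knot h a i) / 2) +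
                Real.sin ((knot h a (i + 2) - x) / 2) * (Real.cos ((x - knot h a i) / 2) / 2))))) / θc) x := by
    intro x
    exact (((hasDerivAt_w (knot h a (i - 2)) x).mul ((hasDerivAt_p (knot h a (i + 1)) x).pow 2)).add
      ((hasDerivAt_p (knot h a (i + 2)) x).mul
        (((hasDerivAt_w (knot h a (i - 1)) x).mul (hasDerivAt_p (knot h a (i + 1)) x)).add
          ((hasDerivAt_p (knot h a (i + 2)) x).mul (hasDerivAt_w (knot h a i) x))))).div_const θc
  refine ⟨?_, ?_, ?_, ?_, ?_⟩
  · -- at knot (i-2): deriv 0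
    refine glue (by linarith [lt_add_one (knot h a (i-2) - 1)]) (kord _ _ (by omega : (i-2:ℤ) < i-1))
      (hasDerivAt_const _ 0) ?_ E0 E1
    have := D1 (knot h a (i - 2))
    convert this using 1
    try simp only [hθ, knot]
    try push_cast
    try field_simp [ne_of_gt s_pos, ne_of_gt sh_pos, ne_of_gt s3_pos]
    try ring_nf
    try simp only [Real.sin_zero, Real.cos_zero]
    try rw [hsinh']
    try rw [hsin3']
    try ring
  · -- at knot (i-1)
    refine glue (kord _ _ (by omega : (i-2:ℤ) < i-1)) (kord _ _ (by omega : (i-1:ℤ) < i)) ?_ ?_ E1 E2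
    · convert D1 (knot h a (i - 1)) using 1
      try simp only [hθ, knot]
      try push_cast
      try field_simp [ne_of_gt s_pos, ne_of_gt sh_pos, ne_of_gt s3_pos]
      try ring_nf
      try simp only [Real.sin_zero, Real.cos_zero]
      try rw [hsinh']
      try rw [hsin3']
      try ring
    · convert D2 (knot h a (i - 1)) using 1
      try simp only [hθ, knot]
      try push_cast
      try field_simp [ne_of_gt s_pos, ne_of_gt sh_pos, ne_of_gt s3_pos]
      try ring_nf
      try simp only [Real.sin_zero, Real.cos_zero]
      try rw [hsinh']
      try rw [hsin3']
      try ring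
  · -- at knot i
    refine glue (kord _ _ (by omega : (i-1:ℤ) < i)) (kord _ _ (by omega : (i:ℤ) < i+1)) ?_ ?_ E2 E3
    · convert D2 (knot h a i) using 1
      try simp only [hθ, knot]
      try push_cast
      try field_simp [ne_of_gt s_pos, ne_of_gt sh_pos, ne_of_gt s3_pos]
      try ring_nf
      try simp only [Real.sin_zero, Real.cos_zero]
      try rw [hsinh']
      try rw [hsin3']
      try ring
    · convert D3 (knot h a i) using 1
      try simp only [hθ, knot]
      try push_cast
      try field_simp [ne_of_gt s_pos, ne_of_gt sh_pos, ne_of_gt s3_pos]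
      try ring_nf
      try simp only [Real.sin_zero, Real.cos_zero]
      try rw [hsinh']
      try rw [hsin3']
      try ring
  · -- at knot (i+1)
    refine glue (kord _ _ (by omega : (i:ℤ) < i+1)) (kord _ _ (by omega : (i+1:ℤ) < i+2)) ?_ ?_ E3 E4
    · convert D3 (knot h a (i + 1)) using 1
      try simp only [hθ, knot]
      try push_cast
      try field_simp [ne_of_gt s_pos, ne_of_gt sh_pos, ne_of_gt s3_pos]
      try ring_nf
      try simp only [Real.sin_zero, Real.cos_zero]
      try rw [hsinh']
      try rw [hsin3']
      try ring
    · convert D4 (knot h a (i + 1)) using 1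
      try simp only [hθ, knot]
      try push_cast
      try field_simp [ne_of_gt s_pos, ne_of_gt sh_pos, ne_of_gt s3_pos]
      try ring_nf
      try simp only [Real.sin_zero, Real.cos_zero]
      try rw [hsinh']
      try rw [hsin3']
      try ring
  · -- at knot (i+2)
    refine glue (kord _ _ (by omega : (i+1:ℤ) < i+2)) (by linarith [lt_add_one (knot h a (i+2))]) ?_
      (hasDerivAt_const _ 0) E4 E5
    convert D4 (knot h a (i + 2)) using 1
    try simp only [hθ, knot]
    try push_cast
    try field_simp [ne_of_gt s_pos, ne_of_gt sh_pos, ne_of_gt s3_pos]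
    try ring_nf
    try simp only [Real.sin_zero, Real.cos_zero]
    try rw [hsinh']
    try rw [hsin3']
    try ring
end

section
/- For every i ∈ ℤ, the function CTB_i : ℝ → ℝ is twice continuously differentiable on all of ℝ; in particular, the four trigonometric polynomial pieces and their first and second derivatives agree at the interior knots x_{i−1}, x_i, x_{i+1}, and the outermost pieces join the zero function C²-smoothly at x_{i−2} and x_{i+2}. -/
namespace CTBaux

/-- One-sided cubic truncated trig power at `0`. -/
noncomputable def g0 (t : ℝ) : ℝ := if 0 ≤ t then Real.sin (t / 2) ^ 3 else 0

noncomputable def g1 (t : ℝ) : ℝ :=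
  if 0 ≤ t then 3 / 2 * (Real.sin (t / 2) ^ 2 * Real.cos (t / 2)) else 0

noncomputable def g2 (t : ℝ) : ℝ :=
  if 0 ≤ t then
    3 / 2 * (Real.sin (t / 2) * Real.cos (t / 2) ^ 2) - 3 / 4 * Real.sin (t / 2) ^ 3
  else 0

lemma sin_half_cube_hasDeriv (t : ℝ) :
    HasDerivAt (fun s : ℝ => Real.sin (s / 2) ^ 3)
      (3 / 2 * (Real.sin (t / 2) ^ 2 * Real.cos (t / 2))) t := by
  have h1 : HasDerivAt (fun s : ℝ => s / 2) (1 / 2) t := by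
    simpa using (hasDerivAt_id t).div_const 2
  have h2 : HasDerivAt (fun s : ℝ => Real.sin (s / 2)) (Real.cos (t / 2) * (1 / 2)) t :=
    by have := (Real.hasDerivAt_sin (t / 2)).comp t h1; exact this
  have h3 : HasDerivAt (fun s : ℝ => Real.sin (s / 2) ^ 3)
      (((3 : ℕ) : ℝ) * Real.sin (t / 2) ^ (3 - 1) * (Real.cos (t / 2) * (1 / 2))) t :=
    h2.fun_pow 3
  convert h3 using 1
  push_cast
  ring

lemma sin_half_expr_hasDeriv (t : ℝ) :
    HasDerivAt (fun s : ℝ => 3 / 2 * (Real.sin (s / 2) ^ 2 * Real.cos (s / 2)))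
      (3 / 2 * (Real.sin (t / 2) * Real.cos (t / 2) ^ 2) - 3 / 4 * Real.sin (t / 2) ^ 3) t := by
  have h1 : HasDerivAt (fun s : ℝ => s / 2) (1 / 2) t := by
    simpa using (hasDerivAt_id t).div_const 2
  have hs : HasDerivAt (fun s : ℝ => Real.sin (s / 2)) (Real.cos (t / 2) * (1 / 2)) t :=
    by have := (Real.hasDerivAt_sin (t / 2)).comp t h1; exact this
  have hc : HasDerivAt (fun s : ℝ => Real.cos (s / 2)) (-Real.sin (t / 2) * (1 / 2)) t :=
    by have := (Real.hasDerivAt_cos (t / 2)).comp t h1; exact this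
  have hp : HasDerivAt (fun s : ℝ => Real.sin (s / 2) ^ 2)
      (((2 : ℕ) : ℝ) * Real.sin (t / 2) ^ (2 - 1) * (Real.cos (t / 2) * (1 / 2))) t :=
    hs.fun_pow 2
  have h : HasDerivAt (fun s : ℝ => 3 / 2 * (Real.sin (s / 2) ^ 2 * Real.cos (s / 2)))
      (3 / 2 * (((2 : ℕ) : ℝ) * Real.sin (t / 2) ^ (2 - 1) * (Real.cos (t / 2) * (1 / 2))
        * Real.cos (t / 2) + Real.sin (t / 2) ^ 2 * (-Real.sin (t / 2) * (1 / 2)))) t :=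
    (hp.mul hc).const_mul (3 / 2 : ℝ)
  convert h using 1
  push_cast
  ring

lemma hasDerivAt_zero_of_sq_bound {f : ℝ → ℝ} (hf0 : f 0 = 0)
    (hb : ∀ t : ℝ, |f t| ≤ t ^ 2) : HasDerivAt f 0 0 := by
  rw [hasDerivAt_iff_isLittleO, hf0]
  have h1 : (fun t : ℝ => f t) =O[nhds 0] fun t : ℝ => t ^ 2 := by
    apply Asymptotics.isBigO_of_le
    intro t
    simpa [Real.norm_eq_abs, abs_of_nonneg (sq_nonneg t)] using hb t
  have h2 : (fun t : ℝ => t ^ 2) =o[nhds (0 : ℝ)] fun t : ℝ => t :=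
    Asymptotics.isLittleO_pow_id (by norm_num)
  have := h1.trans_isLittleO h2
  simpa using this

lemma g0_bound (t : ℝ) : |g0 t| ≤ t ^ 2 := by
  unfold g0
  split_ifs with hc
  · have h1 : |Real.sin (t / 2)| ≤ |t / 2| := Real.abs_sin_le_abs
    have h2 : |Real.sin (t / 2)| ≤ 1 := Real.abs_sin_le_one _
    have h3 : (0 : ℝ) ≤ |Real.sin (t / 2)| := abs_nonneg _
    have h4 : |t / 2| ^ 2 = t ^ 2 / 4 := by
      rw [sq_abs]; ring
    have h5 : |Real.sin (t / 2)| ^ 2 ≤ t ^ 2 / 4 := by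
      have := pow_le_pow_left₀ h3 h1 2
      rw [h4] at this
      exact this
    rw [abs_pow]
    calc |Real.sin (t / 2)| ^ 3 = |Real.sin (t / 2)| ^ 2 * |Real.sin (t / 2)| := by ring
      _ ≤ (t ^ 2 / 4) * 1 := by
          apply mul_le_mul h5 h2 h3 (by positivity)
      _ ≤ t ^ 2 := by nlinarith [sq_nonneg t]
  · simpa using sq_nonneg t

lemma g1_bound (t : ℝ) : |g1 t| ≤ t ^ 2 := by
  unfold g1
  split_ifs with hc
  · have h1 : |Real.sin (t / 2)| ≤ |t / 2| := Real.abs_sin_le_abs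
    have h2 : |Real.cos (t / 2)| ≤ 1 := Real.abs_cos_le_one _
    have h3 : (0 : ℝ) ≤ |Real.sin (t / 2)| := abs_nonneg _
    have h4 : |t / 2| ^ 2 = t ^ 2 / 4 := by
      rw [sq_abs]; ring
    have : |3 / 2 * (Real.sin (t / 2) ^ 2 * Real.cos (t / 2))|
        = 3 / 2 * (|Real.sin (t / 2)| ^ 2 * |Real.cos (t / 2)|) := by
      rw [abs_mul, abs_mul, abs_pow]
      norm_num
    have h5 : |Real.sin (t / 2)| ^ 2 ≤ t ^ 2 / 4 := by
      have := pow_le_pow_left₀ h3 h1 2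
      rw [h4] at this
      exact this
    rw [this]
    calc 3 / 2 * (|Real.sin (t / 2)| ^ 2 * |Real.cos (t / 2)|)
        ≤ 3 / 2 * ((t ^ 2 / 4) * 1) := by
          apply mul_le_mul_of_nonneg_left _ (by norm_num)
          apply mul_le_mul h5 h2 (abs_nonneg _) (by positivity)
      _ ≤ t ^ 2 := by nlinarith [sq_nonneg t]
  · simpa using sq_nonneg t

lemma hasDerivAt_g0 (t : ℝ) : HasDerivAt g0 (g1 t) t := by
  rcases lt_trichotomy t 0 with ht | ht | ht
  · have hev : g0 =ᶠ[nhds t] fun _ => (0 : ℝ) := by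
      filter_upwards [Iio_mem_nhds ht] with s hs
      simp [g0, not_le.mpr (Set.mem_Iio.mp hs)]
    have := (hasDerivAt_const t (0 : ℝ)).congr_of_eventuallyEq hev
    simpa [g1, not_le.mpr ht] using this
  · subst ht
    have h := hasDerivAt_zero_of_sq_bound (by simp [g0]) g0_bound
    simpa [g1] using h
  · have hev : g0 =ᶠ[nhds t] fun s => Real.sin (s / 2) ^ 3 := by
      filter_upwards [Ioi_mem_nhds ht] with s hs
      simp [g0, le_of_lt (Set.mem_Ioi.mp hs)]
    have := (sin_half_cube_hasDeriv t).congr_of_eventuallyEq hev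
    simpa [g1, ht.le] using this

lemma hasDerivAt_g1 (t : ℝ) : HasDerivAt g1 (g2 t) t := by
  rcases lt_trichotomy t 0 with ht | ht | ht
  · have hev : g1 =ᶠ[nhds t] fun _ => (0 : ℝ) := by
      filter_upwards [Iio_mem_nhds ht] with s hs
      simp [g1, not_le.mpr (Set.mem_Iio.mp hs)]
    have := (hasDerivAt_const t (0 : ℝ)).congr_of_eventuallyEq hev
    simpa [g2, not_le.mpr ht] using this
  · subst ht
    have h := hasDerivAt_zero_of_sq_bound (by simp [g1]) g1_bound
    simpa [g2] using h
  · have hev : g1 =ᶠ[nhds t] fun s => 3 / 2 * (Real.sin (s / 2) ^ 2 * Real.cos (s / 2)) := by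
      filter_upwards [Ioi_mem_nhds ht] with s hs
      simp [g1, le_of_lt (Set.mem_Ioi.mp hs)]
    have := (sin_half_expr_hasDeriv t).congr_of_eventuallyEq hev
    simpa [g2, ht.le] using this

lemma continuous_g2 : Continuous g2 := by
  unfold g2
  apply Continuous.if_le
  · fun_prop
  · fun_prop
  · exact continuous_const
  · exact continuous_id
  · intro x hx
    simp [← hx]

lemma contDiff_g0 : ContDiff ℝ 2 g0 := by
  have e0 : deriv g0 = g1 := funext fun t => (hasDerivAt_g0 t).deriv
  have e1 : deriv g1 = g2 := funext fun t => (hasDerivAt_g1 t).deriv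
  rw [show (2 : WithTop ℕ∞) = 1 + 1 from rfl, contDiff_succ_iff_deriv]
  refine ⟨fun t => (hasDerivAt_g0 t).differentiableAt, by simp, ?_⟩
  rw [e0, contDiff_one_iff_deriv, e1]
  exact ⟨fun t => (hasDerivAt_g1 t).differentiableAt, continuous_g2⟩

/-- Truncated cubic trig power based at the knot `x_j`. -/
noncomputable def T (h a : ℝ) (j : ℤ) (x : ℝ) : ℝ :=
  if knot h a j ≤ x then Real.sin ((x - knot h a j) / 2) ^ 3 else 0

lemma contDiff_T (h a : ℝ) (j : ℤ) : ContDiff ℝ 2 (T h a j) := by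
  have hT : T h a j = fun x => g0 (x - knot h a j) := by
    funext x
    simp [T, g0, sub_nonneg]
  rw [hT]
  exact contDiff_g0.comp (contDiff_id.sub contDiff_const)

lemma T_pos (h a : ℝ) (j : ℤ) {x : ℝ} (hx : knot h a j ≤ x) :
    T h a j x = Real.sin ((x - knot h a j) / 2) ^ 3 := if_pos hx

lemma T_zero (h a : ℝ) (j : ℤ) {x : ℝ} (hx : x ≤ knot h a j) : T h a j x = 0 := by
  unfold T
  split_ifs with hc
  · rw [le_antisymm hx hc]
    simp
  · rfl

lemma knot_mono (h a : ℝ) (hh : 0 < h) {j k : ℤ} (hjk : j ≤ k) :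
    knot h a j ≤ knot h a k := by
  unfold knot
  have hr : (j : ℝ) ≤ (k : ℝ) := by exact_mod_cast hjk
  nlinarith

/-- The spline written as a combination of truncated powers, divided by
`Θ = sin(h/2)² sin(h)² sin(3h/2)`. -/
noncomputable def G (h a : ℝ) (i : ℤ) (x : ℝ) : ℝ :=
  (Real.sin (h / 2) * Real.sin (2 * (h / 2)) * T h a (i - 2) x
    + -(Real.sin (2 * (h / 2)) * Real.sin (2 * (h / 2) + 2 * (h / 2))) * T h a (i - 1) x
    + Real.sin (2 * (h / 2) + h / 2) * Real.sin (2 * (h / 2) + 2 * (h / 2)) * T h a i x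
    + -(Real.sin (2 * (h / 2)) * Real.sin (2 * (h / 2) + 2 * (h / 2))) * T h a (i + 1) x
    + Real.sin (h / 2) * Real.sin (2 * (h / 2)) * T h a (i + 2) x)
  / (Real.sin (h / 2) ^ 2 * Real.sin (2 * (h / 2)) ^ 2 * Real.sin (2 * (h / 2) + h / 2))

lemma contDiff_G (h a : ℝ) (i : ℤ) : ContDiff ℝ 2 (G h a i) := by
  unfold G
  apply ContDiff.div_const
  exact ((((contDiff_const.mul (contDiff_T h a (i - 2))).add
      (contDiff_const.mul (contDiff_T h a (i - 1)))).add
      (contDiff_const.mul (contDiff_T h a i))).add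
      (contDiff_const.mul (contDiff_T h a (i + 1)))).add
      (contDiff_const.mul (contDiff_T h a (i + 2)))

lemma key2 (v d : ℝ) :
    Real.sin d * Real.sin (2 * d) *
      (Real.sin (v + 2 * d) * (Real.sin (v + 2 * d) * Real.sin (-v)
          + Real.sin (d - v) * Real.sin (v + d))
        + Real.sin (2 * d - v) * Real.sin (v + d) ^ 2)
    = Real.sin d * Real.sin (2 * d) * Real.sin (v + 2 * d) ^ 3
      + -(Real.sin (2 * d) * Real.sin (2 * d + 2 * d)) * Real.sin (v + d) ^ 3 := by
  simp only [Real.sin_add, Real.cos_add, Real.sin_sub, Real.cos_sub, Real.sin_neg,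
    Real.sin_two_mul, Real.cos_two_mul]
  ring

lemma key3 (v d : ℝ) :
    Real.sin d * Real.sin (2 * d) *
      (Real.sin (v + 2 * d) * Real.sin (d - v) ^ 2
        + Real.sin (2 * d - v) * (Real.sin (v + d) * Real.sin (d - v)
            + Real.sin (2 * d - v) * Real.sin v))
    = Real.sin d * Real.sin (2 * d) * Real.sin (v + 2 * d) ^ 3
      + -(Real.sin (2 * d) * Real.sin (2 * d + 2 * d)) * Real.sin (v + d) ^ 3
      + Real.sin (2 * d + d) * Real.sin (2 * d + 2 * d) * Real.sin v ^ 3 := by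
  simp only [Real.sin_add, Real.cos_add, Real.sin_sub, Real.cos_sub, Real.sin_neg,
    Real.sin_two_mul, Real.cos_two_mul]
  ring

lemma key4 (v d : ℝ) :
    Real.sin d * Real.sin (2 * d) * Real.sin (2 * d - v) ^ 3
    = Real.sin d * Real.sin (2 * d) * Real.sin (v + 2 * d) ^ 3
      + -(Real.sin (2 * d) * Real.sin (2 * d + 2 * d)) * Real.sin (v + d) ^ 3
      + Real.sin (2 * d + d) * Real.sin (2 * d + 2 * d) * Real.sin v ^ 3
      + -(Real.sin (2 * d) * Real.sin (2 * d + 2 * d)) * Real.sin (v - d) ^ 3 := by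
  simp only [Real.sin_add, Real.cos_add, Real.sin_sub, Real.cos_sub, Real.sin_neg,
    Real.sin_two_mul, Real.cos_two_mul]
  ring

lemma key5 (v d : ℝ) :
    Real.sin d * Real.sin (2 * d) * Real.sin (v + 2 * d) ^ 3
      + -(Real.sin (2 * d) * Real.sin (2 * d + 2 * d)) * Real.sin (v + d) ^ 3
      + Real.sin (2 * d + d) * Real.sin (2 * d + 2 * d) * Real.sin v ^ 3
      + -(Real.sin (2 * d) * Real.sin (2 * d + 2 * d)) * Real.sin (v - d) ^ 3
      + Real.sin d * Real.sin (2 * d) * Real.sin (v - 2 * d) ^ 3 = 0 := by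
  simp only [Real.sin_add, Real.cos_add, Real.sin_sub, Real.cos_sub, Real.sin_neg,
    Real.sin_two_mul, Real.cos_two_mul]
  ring

end CTBaux

open CTBaux in
/-- Each cubic trigonometric B-spline `CTB_i` is twice continuously
differentiable on all of `ℝ`. -/
theorem CTB_contDiff_two (h a : ℝ) (hh : 0 < h) (hh' : h < 2 * Real.pi / 3) (i : ℤ) :
    ContDiff ℝ 2 (CTB h a i) := by
  have hpi := Real.pi_pos
  have hs1 : 0 < Real.sin (h / 2) :=
    Real.sin_pos_of_pos_of_lt_pi (by linarith) (by linarith)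
  have hs2 : 0 < Real.sin h :=
    Real.sin_pos_of_pos_of_lt_pi hh (by linarith)
  have hs3 : 0 < Real.sin (3 * h / 2) :=
    Real.sin_pos_of_pos_of_lt_pi (by linarith) (by linarith)
  have hsin2 : Real.sin (2 * (h / 2)) = Real.sin h := by rw [show 2 * (h / 2) = h by ring]
  have hsin3 : Real.sin (2 * (h / 2) + h / 2) = Real.sin (3 * h / 2) := by
    rw [show 2 * (h / 2) + h / 2 = 3 * h / 2 by ring]
  have hθ : Real.sin (h / 2) * Real.sin h * Real.sin (3 * h / 2) ≠ 0 :=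
    ne_of_gt (mul_pos (mul_pos hs1 hs2) hs3)
  have hΘ : Real.sin (h / 2) ^ 2 * Real.sin (2 * (h / 2)) ^ 2
      * Real.sin (2 * (h / 2) + h / 2) ≠ 0 := by
    rw [hsin2, hsin3]
    exact ne_of_gt (mul_pos (mul_pos (pow_pos hs1 2) (pow_pos hs2 2)) hs3)
  have e1 : (x : ℝ) → (x - knot h a (i - 2)) / 2 = (x - knot h a i) / 2 + 2 * (h / 2) := by
    intro x; unfold knot; push_cast; ring
  have e2 : (x : ℝ) → (x - knot h a (i - 1)) / 2 = (x - knot h a i) / 2 + h / 2 := by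
    intro x; unfold knot; push_cast; ring
  have e3 : (x : ℝ) → (knot h a i - x) / 2 = -((x - knot h a i) / 2) := by
    intro x; ring
  have e4 : (x : ℝ) → (knot h a (i + 1) - x) / 2 = h / 2 - (x - knot h a i) / 2 := by
    intro x; unfold knot; push_cast; ring
  have e5 : (x : ℝ) → (knot h a (i + 2) - x) / 2 = 2 * (h / 2) - (x - knot h a i) / 2 := by
    intro x; unfold knot; push_cast; ring
  have e6 : (x : ℝ) → (x - knot h a (i + 1)) / 2 = (x - knot h a i) / 2 - h / 2 := by
    intro x; unfold knot; push_cast; ring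
  have e7 : (x : ℝ) → (x - knot h a (i + 2)) / 2 = (x - knot h a i) / 2 - 2 * (h / 2) := by
    intro x; unfold knot; push_cast; ring
  have hEq : CTB h a i = G h a i := by
    funext x
    simp only [CTB, G]
    split_ifs with h1 h2 h3 h4
    · obtain ⟨ha1, hb1⟩ := h1
      rw [T_pos h a (i - 2) ha1,
        T_zero h a (i - 1) hb1,
        T_zero h a i (hb1.trans (knot_mono h a hh (by omega))),
        T_zero h a (i + 1) (hb1.trans (knot_mono h a hh (by omega))),
        T_zero h a (i + 2) (hb1.trans (knot_mono h a hh (by omega))),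
        div_eq_div_iff hθ hΘ, hsin2, hsin3]
      ring
    · obtain ⟨ha2, hb2⟩ := h2
      rw [T_pos h a (i - 2) ((knot_mono h a hh (by omega)).trans ha2),
        T_pos h a (i - 1) ha2,
        T_zero h a i hb2,
        T_zero h a (i + 1) (hb2.trans (knot_mono h a hh (by omega))),
        T_zero h a (i + 2) (hb2.trans (knot_mono h a hh (by omega))),
        div_eq_div_iff hθ hΘ, e1 x, e2 x, e3 x, e4 x, e5 x, ← hsin2, ← hsin3]
      linear_combination (Real.sin (h / 2) * Real.sin (2 * (h / 2))
        * Real.sin (2 * (h / 2) + h / 2)) * key2 ((x - knot h a i) / 2) (h / 2)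
    · obtain ⟨ha3, hb3⟩ := h3
      rw [T_pos h a (i - 2) ((knot_mono h a hh (by omega)).trans ha3),
        T_pos h a (i - 1) ((knot_mono h a hh (by omega)).trans ha3),
        T_pos h a i ha3,
        T_zero h a (i + 1) hb3,
        T_zero h a (i + 2) (hb3.trans (knot_mono h a hh (by omega))),
        div_eq_div_iff hθ hΘ, e1 x, e2 x, e4 x, e5 x, ← hsin2, ← hsin3]
      linear_combination (Real.sin (h / 2) * Real.sin (2 * (h / 2))
        * Real.sin (2 * (h / 2) + h / 2)) * key3 ((x - knot h a i) / 2) (h / 2)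
    · obtain ⟨ha4, hb4⟩ := h4
      rw [T_pos h a (i - 2) ((knot_mono h a hh (by omega)).trans ha4),
        T_pos h a (i - 1) ((knot_mono h a hh (by omega)).trans ha4),
        T_pos h a i ((knot_mono h a hh (by omega)).trans ha4),
        T_pos h a (i + 1) ha4,
        T_zero h a (i + 2) hb4,
        div_eq_div_iff hθ hΘ, e1 x, e2 x, e5 x, e6 x, ← hsin2, ← hsin3]
      linear_combination (Real.sin (h / 2) * Real.sin (2 * (h / 2))
        * Real.sin (2 * (h / 2) + h / 2)) * key4 ((x - knot h a i) / 2) (h / 2)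
    · rcases le_or_gt x (knot h a (i - 2)) with hle | hgt
      · rw [T_zero h a (i - 2) hle,
          T_zero h a (i - 1) (hle.trans (knot_mono h a hh (by omega))),
          T_zero h a i (hle.trans (knot_mono h a hh (by omega))),
          T_zero h a (i + 1) (hle.trans (knot_mono h a hh (by omega))),
          T_zero h a (i + 2) (hle.trans (knot_mono h a hh (by omega)))]
        simp
      · rcases le_or_gt (knot h a (i + 2)) x with hge | hlt
        · rw [T_pos h a (i - 2) ((knot_mono h a hh (by omega)).trans hge),
            T_pos h a (i - 1) ((knot_mono h a hh (by omega)).trans hge),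
            T_pos h a i ((knot_mono h a hh (by omega)).trans hge),
            T_pos h a (i + 1) ((knot_mono h a hh (by omega)).trans hge),
            T_pos h a (i + 2) hge, e1 x, e2 x, e6 x, e7 x]
          symm
          rw [div_eq_zero_iff]
          left
          linear_combination key5 ((x - knot h a i) / 2) (h / 2)
        · exfalso
          push_neg at h1 h2 h3 h4
          have c1 := h1 hgt.le
          have c2 := h2 c1.le
          have c3 := h3 c2.le
          have c4 := h4 c3.le
          exact absurd hlt (not_lt.mpr c4.le)
  rw [hEq]
  exact contDiff_G h a i
end

section
/- Let N ≥ 1, let δ_{−1}, δ_0, …, δ_{N+1} be real parameters, and let U_N(x) = Σ_{i=−1}^{N+1} δ_i·CTB_i(x). Then U_N is differentiable and for every m with 0 ≤ m ≤ N, U_N'(x_m) = β₁·δ_{m−1} + β₂·δ_{m+1}, where β₁ = −(3/4)·csc(3h/2) and β₂ = (3/4)·csc(3h/2). -/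
noncomputable def B1 (h a : ℝ) (i : ℤ) (x : ℝ) : ℝ :=
  Real.sin ((x - knot h a (i - 2)) / 2) ^ 3 / (Real.sin (h / 2) * Real.sin h * Real.sin (3 * h / 2))

noncomputable def B2 (h a : ℝ) (i : ℤ) (x : ℝ) : ℝ :=
  ((Real.sin ((x - knot h a (i - 2)) / 2) * ((Real.sin ((x - knot h a (i - 2)) / 2) * Real.sin ((knot h a (i) - x) / 2)) + (Real.sin ((knot h a (i + 1) - x) / 2) * Real.sin ((x - knot h a (i - 1)) / 2)))) + (Real.sin ((knot h a (i + 2) - x) / 2) * Real.sin ((x - knot h a (i - 1)) / 2) ^ 2)) / (Real.sin (h / 2) * Real.sin h * Real.sin (3 * h / 2))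

noncomputable def B3 (h a : ℝ) (i : ℤ) (x : ℝ) : ℝ :=
  ((Real.sin ((x - knot h a (i - 2)) / 2) * Real.sin ((knot h a (i + 1) - x) / 2) ^ 2) + (Real.sin ((knot h a (i + 2) - x) / 2) * ((Real.sin ((x - knot h a (i - 1)) / 2) * Real.sin ((knot h a (i + 1) - x) / 2)) + (Real.sin ((knot h a (i + 2) - x) / 2) * Real.sin ((x - knot h a (i)) / 2))))) / (Real.sin (h / 2) * Real.sin h * Real.sin (3 * h / 2))

noncomputable def B4 (h a : ℝ) (i : ℤ) (x : ℝ) : ℝ :=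
  Real.sin ((knot h a (i + 2) - x) / 2) ^ 3 / (Real.sin (h / 2) * Real.sin h * Real.sin (3 * h / 2))

noncomputable def D1 (h a : ℝ) (i : ℤ) (x : ℝ) : ℝ :=
  ((((3 : ℕ) : ℝ) * Real.sin ((x - knot h a (i - 2)) / 2) ^ 2) * (Real.cos ((x - knot h a (i - 2)) / 2) * (1 / 2))) / (Real.sin (h / 2) * Real.sin h * Real.sin (3 * h / 2))

noncomputable def D2 (h a : ℝ) (i : ℤ) (x : ℝ) : ℝ :=
  ((((Real.cos ((x - knot h a (i - 2)) / 2) * (1 / 2)) * ((Real.sin ((x - knot h a (i - 2)) / 2) * Real.sin ((knot h a (i) - x) / 2)) + (Real.sin ((knot h a (i + 1) - x) / 2) * Real.sin ((x - knot h a (i - 1)) / 2)))) + (Real.sin ((x - knot h a (i - 2)) / 2) * ((((Real.cos ((x - knot h a (i - 2)) / 2) * (1 / 2)) * Real.sin ((knot h a (i) - x) / 2)) + (Real.sin ((x - knot h a (i - 2)) / 2) * (Real.cos ((knot h a (i) - x) / 2) * (-1 / 2)))) + (((Real.cos ((knot h a (i + 1) - x) / 2) * (-1 / 2)) * Real.sin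 ((x - knot h a (i - 1)) / 2)) + (Real.sin ((knot h a (i + 1) - x) / 2) * (Real.cos ((x - knot h a (i - 1)) / 2) * (1 / 2))))))) + (((Real.cos ((knot h a (i + 2) - x) / 2) * (-1 / 2)) * Real.sin ((x - knot h a (i - 1)) / 2) ^ 2) + (Real.sin ((knot h a (i + 2) - x) / 2) * ((((2 : ℕ) : ℝ) * Real.sin ((x - knot h a (i - 1)) / 2) ^ 1) * (Real.cos ((x - knot h a (i - 1)) / 2) * (1 / 2)))))) / (Real.sin (h / 2) * Real.sin h * Real.sin (3 * h / 2))

noncomputable def D3 (h a : ℝ) (i : ℤ) (x : ℝ) : ℝ :=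
  ((((Real.cos ((x - knot h a (i - 2)) / 2) * (1 / 2)) * Real.sin ((knot h a (i + 1) - x) / 2) ^ 2) + (Real.sin ((x - knot h a (i - 2)) / 2) * ((((2 : ℕ) : ℝ) * Real.sin ((knot h a (i + 1) - x) / 2) ^ 1) * (Real.cos ((knot h a (i + 1) - x) / 2) * (-1 / 2))))) + (((Real.cos ((knot h a (i + 2) - x) / 2) * (-1 / 2)) * ((Real.sin ((x - knot h a (i - 1)) / 2) * Real.sin ((knot h a (i + 1) - x) / 2)) + (Real.sin ((knot h a (i + 2) - x) / 2) * Real.sin ((x - knot h a (i)) / 2)))) + (Real.sin ((knot h a (i + 2) - x) / 2) * ((((Real.cos ((x - knot h a (i - 1)) / 2) * (1 / 2)) * Real.sin ((knot h a (i + 1) - x) / 2)) + (Real.sin ((x - knot h a (i - 1)) / 2) * (Real.cos ((knot h a (i + 1) - x) / 2) * (-1 / 2)))) + (((Real.cos ((knot h a (i + 2) - x) / 2) * (-1 / 2)) * Real.sin ((x - knot h a (i)) / 2)) + (Real.sin ((knot h a (i + 2) - x) / 2) * (Real.cos ((x - knot h a (i)) / 2) * (1 / 2)))))))) / (Real.sin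 (h / 2) * Real.sin h * Real.sin (3 * h / 2))

noncomputable def D4 (h a : ℝ) (i : ℤ) (x : ℝ) : ℝ :=
  ((((3 : ℕ) : ℝ) * Real.sin ((knot h a (i + 2) - x) / 2) ^ 2) * (Real.cos ((knot h a (i + 2) - x) / 2) * (-1 / 2))) / (Real.sin (h / 2) * Real.sin h * Real.sin (3 * h / 2))


noncomputable def pick (h a : ℝ) (i : ℤ) (x : ℝ) (f1 f2 f3 f4 g : ℝ) : ℝ :=
  if knot h a (i - 2) ≤ x ∧ x ≤ knot h a (i - 1) then f1
  else if knot h a (i - 1) ≤ x ∧ x ≤ knot h a i then f2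
  else if knot h a i ≤ x ∧ x ≤ knot h a (i + 1) then f3
  else if knot h a (i + 1) ≤ x ∧ x ≤ knot h a (i + 2) then f4
  else g

noncomputable def DCTB (h a : ℝ) (i : ℤ) (x : ℝ) : ℝ :=
  pick h a i x (D1 h a i x) (D2 h a i x) (D3 h a i x) (D4 h a i x) 0

lemma ctb_eq (h a : ℝ) (i : ℤ) (x : ℝ) :
    CTB h a i x = pick h a i x (B1 h a i x) (B2 h a i x) (B3 h a i x) (B4 h a i x) 0 := rfl

lemma knot_lt {h : ℝ} (a : ℝ) (hh : 0 < h) {j k : ℤ} (hjk : j < k) :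
    knot h a j < knot h a k := by
  unfold knot
  have : (j : ℝ) < (k : ℝ) := by exact_mod_cast hjk
  nlinarith

section picklemmas
variable {h a : ℝ} {i : ℤ} {y : ℝ} (f1 f2 f3 f4 g : ℝ)

lemma pick_on1 (hy : knot h a (i - 2) ≤ y ∧ y ≤ knot h a (i - 1)) :
    pick h a i y f1 f2 f3 f4 g = f1 := if_pos hy

lemma pick_on2 (hh : 0 < h) (hy1 : knot h a (i - 1) < y) (hy2 : y ≤ knot h a i) :
    pick h a i y f1 f2 f3 f4 g = f2 := by
  unfold pick
  rw [if_neg (fun hc => absurd hc.2 (not_le.mpr hy1)), if_pos ⟨hy1.le, hy2⟩]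

lemma pick_on3 (hh : 0 < h) (hy1 : knot h a i < y) (hy2 : y ≤ knot h a (i + 1)) :
    pick h a i y f1 f2 f3 f4 g = f3 := by
  have h1 : knot h a (i - 1) < knot h a i := knot_lt a hh (by omega)
  unfold pick
  rw [if_neg (fun hc => absurd hc.2 (not_le.mpr (by linarith))),
    if_neg (fun hc => absurd hc.2 (not_le.mpr hy1)), if_pos ⟨hy1.le, hy2⟩]

lemma pick_on4 (hh : 0 < h) (hy1 : knot h a (i + 1) < y) (hy2 : y ≤ knot h a (i + 2)) :
    pick h a i y f1 f2 f3 f4 g = f4 := by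
  have h1 : knot h a (i - 1) < knot h a (i + 1) := knot_lt a hh (by omega)
  have h2 : knot h a i < knot h a (i + 1) := knot_lt a hh (by omega)
  unfold pick
  rw [if_neg (fun hc => absurd hc.2 (not_le.mpr (by linarith))),
    if_neg (fun hc => absurd hc.2 (not_le.mpr (by linarith))),
    if_neg (fun hc => absurd hc.2 (not_le.mpr hy1)), if_pos ⟨hy1.le, hy2⟩]

lemma pick_on0 (hh : 0 < h) (hy : y < knot h a (i - 2)) :
    pick h a i y f1 f2 f3 f4 g = g := by
  have h1 : knot h a (i - 2) < knot h a (i - 1) := knot_lt a hh (by omega)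
  have h2 : knot h a (i - 2) < knot h a (i - 1) := h1
  have h3 : knot h a (i - 2) < knot h a i := knot_lt a hh (by omega)
  have h4 : knot h a (i - 2) < knot h a (i + 1) := knot_lt a hh (by omega)
  unfold pick
  rw [if_neg (fun hc => absurd hc.1 (not_le.mpr hy)),
    if_neg (fun hc => absurd hc.1 (not_le.mpr (by linarith))),
    if_neg (fun hc => absurd hc.1 (not_le.mpr (by linarith))),
    if_neg (fun hc => absurd hc.1 (not_le.mpr (by linarith)))]

lemma pick_on5 (hh : 0 < h) (hy : knot h a (i + 2) < y) :
    pick h a i y f1 f2 f3 f4 g = g := by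
  have h1 : knot h a (i - 1) < knot h a (i + 2) := knot_lt a hh (by omega)
  have h2 : knot h a i < knot h a (i + 2) := knot_lt a hh (by omega)
  have h3 : knot h a (i + 1) < knot h a (i + 2) := knot_lt a hh (by omega)
  unfold pick
  rw [if_neg (fun hc => absurd hc.2 (not_le.mpr (by linarith))),
    if_neg (fun hc => absurd hc.2 (not_le.mpr (by linarith))),
    if_neg (fun hc => absurd hc.2 (not_le.mpr (by linarith))),
    if_neg (fun hc => absurd hc.2 (not_le.mpr hy))]

end picklemmas

lemma e_sin_h (h : ℝ) : Real.sin h = 2 * Real.sin (h / 2) * Real.cos (h / 2) := by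
  have := Real.sin_two_mul (h / 2)
  rw [show 2 * (h / 2) = h by ring] at this
  rw [this]

lemma e_cos_h (h : ℝ) : Real.cos h = Real.cos (h / 2) ^ 2 - Real.sin (h / 2) ^ 2 := by
  have := Real.cos_two_mul' (h / 2)
  rw [show 2 * (h / 2) = h by ring] at this
  rw [this]

lemma e_sin_3h2 (h : ℝ) :
    Real.sin (3 * h / 2) =
      Real.sin (h / 2) * (Real.cos (h / 2) ^ 2 - Real.sin (h / 2) ^ 2) +
        Real.cos (h / 2) * (2 * Real.sin (h / 2) * Real.cos (h / 2)) := by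
  have := Real.sin_add (h / 2) h
  rw [show h / 2 + h = 3 * h / 2 by ring] at this
  rw [this, e_sin_h h, e_cos_h h]

lemma e_cos_3h2 (h : ℝ) :
    Real.cos (3 * h / 2) =
      Real.cos (h / 2) * (Real.cos (h / 2) ^ 2 - Real.sin (h / 2) ^ 2) -
        Real.sin (h / 2) * (2 * Real.sin (h / 2) * Real.cos (h / 2)) := by
  have := Real.cos_add (h / 2) h
  rw [show h / 2 + h = 3 * h / 2 by ring] at this
  rw [this, e_sin_h h, e_cos_h h]

lemma hw (c x : ℝ) :
    HasDerivAt (fun y : ℝ => Real.sin ((y - c) / 2)) (Real.cos ((x - c) / 2) * (1 / 2)) x := by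
  have h1 : HasDerivAt (fun y : ℝ => (y - c) / 2) (1 / 2) x := by
    simpa using ((hasDerivAt_id x).sub_const c).div_const 2
  have := (Real.hasDerivAt_sin ((x - c) / 2)).comp x h1; exact this

lemma hp (c x : ℝ) :
    HasDerivAt (fun y : ℝ => Real.sin ((c - y) / 2)) (Real.cos ((c - x) / 2) * (-1 / 2)) x := by
  have h1 : HasDerivAt (fun y : ℝ => (c - y) / 2) (-1 / 2) x := by
    simpa using ((hasDerivAt_id x).const_sub c).div_const 2
  have := (Real.hasDerivAt_sin ((c - x) / 2)).comp x h1; exact this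

lemma hasDerivAt_B1 (h a : ℝ) (i : ℤ) (x : ℝ) : HasDerivAt (B1 h a i) (D1 h a i x) x := by
  unfold B1 D1
  exact ((hw (knot h a (i - 2)) x).pow 3).div_const _

lemma hasDerivAt_B2 (h a : ℝ) (i : ℤ) (x : ℝ) : HasDerivAt (B2 h a i) (D2 h a i x) x := by
  unfold B2 D2
  exact (((hw (knot h a (i - 2)) x).mul (((hw (knot h a (i - 2)) x).mul (hp (knot h a i) x)).add ((hp (knot h a (i + 1)) x).mul (hw (knot h a (i - 1)) x)))).add ((hp (knot h a (i + 2)) x).mul ((hw (knot h a (i - 1)) x).pow 2))).div_const _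

lemma hasDerivAt_B3 (h a : ℝ) (i : ℤ) (x : ℝ) : HasDerivAt (B3 h a i) (D3 h a i x) x := by
  unfold B3 D3
  exact (((hw (knot h a (i - 2)) x).mul ((hp (knot h a (i + 1)) x).pow 2)).add ((hp (knot h a (i + 2)) x).mul (((hw (knot h a (i - 1)) x).mul (hp (knot h a (i + 1)) x)).add ((hp (knot h a (i + 2)) x).mul (hw (knot h a i) x))))).div_const _

lemma hasDerivAt_B4 (h a : ℝ) (i : ℤ) (x : ℝ) : HasDerivAt (B4 h a i) (D4 h a i x) x := by
  unfold B4 D4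
  exact ((hp (knot h a (i + 2)) x).pow 3).div_const _

lemma Bval1_num (h a : ℝ) (i : ℤ) :
    ((Real.sin ((knot h a (i - 1) - knot h a (i - 2)) / 2) * ((Real.sin ((knot h a (i - 1) - knot h a (i - 2)) / 2) * Real.sin ((knot h a (i) - knot h a (i - 1)) / 2)) + (Real.sin ((knot h a (i + 1) - knot h a (i - 1)) / 2) * Real.sin ((knot h a (i - 1) - knot h a (i - 1)) / 2)))) + (Real.sin ((knot h a (i + 2) - knot h a (i - 1)) / 2) * Real.sin ((knot h a (i - 1) - knot h a (i - 1)) / 2) ^ 2)) = Real.sin ((knot h a (i - 1) - knot h a (i - 2)) / 2) ^ 3 := by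
  rw [(show ((knot h a (i) - knot h a (i - 1)) / 2) = (h / 2 : ℝ) from by unfold knot; push_cast; ring),
    (show ((knot h a (i + 1) - knot h a (i - 1)) / 2) = (h : ℝ) from by unfold knot; push_cast; ring),
    (show ((knot h a (i + 2) - knot h a (i - 1)) / 2) = (3 * h / 2 : ℝ) from by unfold knot; push_cast; ring),
    (show ((knot h a (i - 1) - knot h a (i - 2)) / 2) = (h / 2 : ℝ) from by unfold knot; push_cast; ring),
    (show ((knot h a (i - 1) - knot h a (i - 1)) / 2) = (0 : ℝ) from by unfold knot; push_cast; ring)]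
  simp only [Real.sin_neg, Real.cos_neg, Real.sin_zero, Real.cos_zero, e_sin_3h2 h, e_cos_3h2 h, e_sin_h h, e_cos_h h]
  push_cast
  ring

lemma Bval2_num (h a : ℝ) (i : ℤ) :
    ((Real.sin ((knot h a (i) - knot h a (i - 2)) / 2) * Real.sin ((knot h a (i + 1) - knot h a (i)) / 2) ^ 2) + (Real.sin ((knot h a (i + 2) - knot h a (i)) / 2) * ((Real.sin ((knot h a (i) - knot h a (i - 1)) / 2) * Real.sin ((knot h a (i + 1) - knot h a (i)) / 2)) + (Real.sin ((knot h a (i + 2) - knot h a (i)) / 2) * Real.sin ((knot h a (i) - knot h a (i)) / 2))))) = ((Real.sin ((knot h a (i) - knot h a (i - 2)) / 2) * ((Real.sin ((knot h a (i) - knot h a (i - 2)) / 2) * Real.sin ((knot h a (i) - knot h a (i)) / 2)) + (Real.sin ((knot h a (i + 1) - knot h a (i)) / 2) * Real.sin ((knot h a (i) - knot h a (i - 1)) / 2)))) + (Real.sin ((knot h a (i + 2) - knot h a (i)) / 2) * Real.sin ((knot h a (i) - knot h a (i - 1)) / 2) ^ 2)) := by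
  rw [(show ((knot h a (i) - knot h a (i)) / 2) = (0 : ℝ) from by unfold knot; push_cast; ring),
    (show ((knot h a (i + 1) - knot h a (i)) / 2) = (h / 2 : ℝ) from by unfold knot; push_cast; ring),
    (show ((knot h a (i + 2) - knot h a (i)) / 2) = (h : ℝ) from by unfold knot; push_cast; ring),
    (show ((knot h a (i) - knot h a (i - 2)) / 2) = (h : ℝ) from by unfold knot; push_cast; ring),
    (show ((knot h a (i) - knot h a (i - 1)) / 2) = (h / 2 : ℝ) from by unfold knot; push_cast; ring)]
  simp only [Real.sin_neg, Real.cos_neg, Real.sin_zero, Real.cos_zero, e_sin_3h2 h, e_cos_3h2 h, e_sin_h h, e_cos_h h]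
  push_cast
  ring

lemma Bval3_num (h a : ℝ) (i : ℤ) :
    Real.sin ((knot h a (i + 2) - knot h a (i + 1)) / 2) ^ 3 = ((Real.sin ((knot h a (i + 1) - knot h a (i - 2)) / 2) * Real.sin ((knot h a (i + 1) - knot h a (i + 1)) / 2) ^ 2) + (Real.sin ((knot h a (i + 2) - knot h a (i + 1)) / 2) * ((Real.sin ((knot h a (i + 1) - knot h a (i - 1)) / 2) * Real.sin ((knot h a (i + 1) - knot h a (i + 1)) / 2)) + (Real.sin ((knot h a (i + 2) - knot h a (i + 1)) / 2) * Real.sin ((knot h a (i + 1) - knot h a (i)) / 2))))) := by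
  rw [(show ((knot h a (i + 1) - knot h a (i + 1)) / 2) = (0 : ℝ) from by unfold knot; push_cast; ring),
    (show ((knot h a (i + 2) - knot h a (i + 1)) / 2) = (h / 2 : ℝ) from by unfold knot; push_cast; ring),
    (show ((knot h a (i + 1) - knot h a (i - 2)) / 2) = (3 * h / 2 : ℝ) from by unfold knot; push_cast; ring),
    (show ((knot h a (i + 1) - knot h a (i - 1)) / 2) = (h : ℝ) from by unfold knot; push_cast; ring),
    (show ((knot h a (i + 1) - knot h a (i)) / 2) = (h / 2 : ℝ) from by unfold knot; push_cast; ring)]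
  simp only [Real.sin_neg, Real.cos_neg, Real.sin_zero, Real.cos_zero, e_sin_3h2 h, e_cos_3h2 h, e_sin_h h, e_cos_h h]
  push_cast
  ring

lemma Dval1_num (h a : ℝ) (i : ℤ) :
    ((((Real.cos ((knot h a (i - 1) - knot h a (i - 2)) / 2) * (1 / 2)) * ((Real.sin ((knot h a (i - 1) - knot h a (i - 2)) / 2) * Real.sin ((knot h a (i) - knot h a (i - 1)) / 2)) + (Real.sin ((knot h a (i + 1) - knot h a (i - 1)) / 2) * Real.sin ((knot h a (i - 1) - knot h a (i - 1)) / 2)))) + (Real.sin ((knot h a (i - 1) - knot h a (i - 2)) / 2) * ((((Real.cos ((knot h a (i - 1) - knot h a (i - 2)) / 2) * (1 / 2)) * Real.sin ((knot h a (i) - knot h a (i - 1)) / 2)) + (Real.sin ((knot h a (i - 1) - knot h a (i - 2)) / 2) * (Real.cos ((knot h a (i) - knot h a (i - 1)) / 2) * (-1 / 2)))) + (((Real.cos ((knot h a (i + 1) - knot h a (i - 1)) / 2) * (-1 / 2)) * Real.sin ((knot h a (i - 1) - knot h a (i - 1)) / 2)) + (Real.sin ((knot h a (i + 1) - knot h a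 (i - 1)) / 2) * (Real.cos ((knot h a (i - 1) - knot h a (i - 1)) / 2) * (1 / 2))))))) + (((Real.cos ((knot h a (i + 2) - knot h a (i - 1)) / 2) * (-1 / 2)) * Real.sin ((knot h a (i - 1) - knot h a (i - 1)) / 2) ^ 2) + (Real.sin ((knot h a (i + 2) - knot h a (i - 1)) / 2) * ((((2 : ℕ) : ℝ) * Real.sin ((knot h a (i - 1) - knot h a (i - 1)) / 2) ^ 1) * (Real.cos ((knot h a (i - 1) - knot h a (i - 1)) / 2) * (1 / 2)))))) = ((((3 : ℕ) : ℝ) * Real.sin ((knot h a (i - 1) - knot h a (i - 2)) / 2) ^ 2) * (Real.cos ((knot h a (i - 1) - knot h a (i - 2)) / 2) * (1 / 2))) := by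
  rw [(show ((knot h a (i) - knot h a (i - 1)) / 2) = (h / 2 : ℝ) from by unfold knot; push_cast; ring),
    (show ((knot h a (i + 1) - knot h a (i - 1)) / 2) = (h : ℝ) from by unfold knot; push_cast; ring),
    (show ((knot h a (i + 2) - knot h a (i - 1)) / 2) = (3 * h / 2 : ℝ) from by unfold knot; push_cast; ring),
    (show ((knot h a (i - 1) - knot h a (i - 2)) / 2) = (h / 2 : ℝ) from by unfold knot; push_cast; ring),
    (show ((knot h a (i - 1) - knot h a (i - 1)) / 2) = (0 : ℝ) from by unfold knot; push_cast; ring)]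
  simp only [Real.sin_neg, Real.cos_neg, Real.sin_zero, Real.cos_zero, e_sin_3h2 h, e_cos_3h2 h, e_sin_h h, e_cos_h h]
  push_cast
  ring

lemma Dval2_num (h a : ℝ) (i : ℤ) :
    ((((Real.cos ((knot h a (i) - knot h a (i - 2)) / 2) * (1 / 2)) * Real.sin ((knot h a (i + 1) - knot h a (i)) / 2) ^ 2) + (Real.sin ((knot h a (i) - knot h a (i - 2)) / 2) * ((((2 : ℕ) : ℝ) * Real.sin ((knot h a (i + 1) - knot h a (i)) / 2) ^ 1) * (Real.cos ((knot h a (i + 1) - knot h a (i)) / 2) * (-1 / 2))))) + (((Real.cos ((knot h a (i + 2) - knot h a (i)) / 2) * (-1 / 2)) * ((Real.sin ((knot h a (i) - knot h a (i - 1)) / 2) * Real.sin ((knot h a (i + 1) - knot h a (i)) / 2)) + (Real.sin ((knot h a (i + 2) - knot h a (i)) / 2) * Real.sin ((knot h a (i) - knot h a (i)) / 2)))) + (Real.sin ((knot h a (i + 2) - knot h a (i)) / 2) * ((((Real.cos ((knot h a (i) - knot h a (i - 1)) / 2) * (1 / 2)) * Real.sin ((knot h a (i + 1) - knot h a (i))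 / 2)) + (Real.sin ((knot h a (i) - knot h a (i - 1)) / 2) * (Real.cos ((knot h a (i + 1) - knot h a (i)) / 2) * (-1 / 2)))) + (((Real.cos ((knot h a (i + 2) - knot h a (i)) / 2) * (-1 / 2)) * Real.sin ((knot h a (i) - knot h a (i)) / 2)) + (Real.sin ((knot h a (i + 2) - knot h a (i)) / 2) * (Real.cos ((knot h a (i) - knot h a (i)) / 2) * (1 / 2)))))))) = ((((Real.cos ((knot h a (i) - knot h a (i - 2)) / 2) * (1 / 2)) * ((Real.sin ((knot h a (i) - knot h a (i - 2)) / 2) * Real.sin ((knot h a (i) - knot h a (i)) / 2)) + (Real.sin ((knot h a (i + 1) - knot h a (i)) / 2) * Real.sin ((knot h a (i) - knot h a (i - 1)) / 2)))) + (Real.sin ((knot h a (i) - knot h a (i - 2)) / 2) * ((((Real.cos ((knot h a (i) - knot h a (i - 2)) / 2) * (1 / 2)) * Real.sin ((knot h a (i) - knot h a (i)) / 2)) + (Real.sin ((knot h a (i) - knot h a (i - 2)) / 2) * (Real.cos ((knot h a (i) - knot h a (i)) / 2) * (-1 / 2)))) + (((Real.cos ((knot h a (i + 1) - knot h a (i))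 / 2) * (-1 / 2)) * Real.sin ((knot h a (i) - knot h a (i - 1)) / 2)) + (Real.sin ((knot h a (i + 1) - knot h a (i)) / 2) * (Real.cos ((knot h a (i) - knot h a (i - 1)) / 2) * (1 / 2))))))) + (((Real.cos ((knot h a (i + 2) - knot h a (i)) / 2) * (-1 / 2)) * Real.sin ((knot h a (i) - knot h a (i - 1)) / 2) ^ 2) + (Real.sin ((knot h a (i + 2) - knot h a (i)) / 2) * ((((2 : ℕ) : ℝ) * Real.sin ((knot h a (i) - knot h a (i - 1)) / 2) ^ 1) * (Real.cos ((knot h a (i) - knot h a (i - 1)) / 2) * (1 / 2)))))) := by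
  rw [(show ((knot h a (i) - knot h a (i)) / 2) = (0 : ℝ) from by unfold knot; push_cast; ring),
    (show ((knot h a (i + 1) - knot h a (i)) / 2) = (h / 2 : ℝ) from by unfold knot; push_cast; ring),
    (show ((knot h a (i + 2) - knot h a (i)) / 2) = (h : ℝ) from by unfold knot; push_cast; ring),
    (show ((knot h a (i) - knot h a (i - 2)) / 2) = (h : ℝ) from by unfold knot; push_cast; ring),
    (show ((knot h a (i) - knot h a (i - 1)) / 2) = (h / 2 : ℝ) from by unfold knot; push_cast; ring)]
  simp only [Real.sin_neg, Real.cos_neg, Real.sin_zero, Real.cos_zero, e_sin_3h2 h, e_cos_3h2 h, e_sin_h h, e_cos_h h]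
  push_cast
  ring

lemma Dval3_num (h a : ℝ) (i : ℤ) :
    ((((3 : ℕ) : ℝ) * Real.sin ((knot h a (i + 2) - knot h a (i + 1)) / 2) ^ 2) * (Real.cos ((knot h a (i + 2) - knot h a (i + 1)) / 2) * (-1 / 2))) = ((((Real.cos ((knot h a (i + 1) - knot h a (i - 2)) / 2) * (1 / 2)) * Real.sin ((knot h a (i + 1) - knot h a (i + 1)) / 2) ^ 2) + (Real.sin ((knot h a (i + 1) - knot h a (i - 2)) / 2) * ((((2 : ℕ) : ℝ) * Real.sin ((knot h a (i + 1) - knot h a (i + 1)) / 2) ^ 1) * (Real.cos ((knot h a (i + 1) - knot h a (i + 1)) / 2) * (-1 / 2))))) + (((Real.cos ((knot h a (i + 2) - knot h a (i + 1)) / 2) * (-1 / 2)) * ((Real.sin ((knot h a (i + 1) - knot h a (i - 1)) / 2) * Real.sin ((knot h a (i + 1) - knot h a (i + 1)) / 2)) + (Real.sin ((knot h a (i + 2) - knot h a (i + 1)) / 2) * Real.sin ((knot h a (i + 1) - knot h a (i)) / 2)))) + (Real.sin ((knot h a (i + 2) - knot h a (i + 1)) / 2) * ((((Real.cos ((knot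 h a (i + 1) - knot h a (i - 1)) / 2) * (1 / 2)) * Real.sin ((knot h a (i + 1) - knot h a (i + 1)) / 2)) + (Real.sin ((knot h a (i + 1) - knot h a (i - 1)) / 2) * (Real.cos ((knot h a (i + 1) - knot h a (i + 1)) / 2) * (-1 / 2)))) + (((Real.cos ((knot h a (i + 2) - knot h a (i + 1)) / 2) * (-1 / 2)) * Real.sin ((knot h a (i + 1) - knot h a (i)) / 2)) + (Real.sin ((knot h a (i + 2) - knot h a (i + 1)) / 2) * (Real.cos ((knot h a (i + 1) - knot h a (i)) / 2) * (1 / 2)))))))) := by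
  rw [(show ((knot h a (i + 1) - knot h a (i + 1)) / 2) = (0 : ℝ) from by unfold knot; push_cast; ring),
    (show ((knot h a (i + 2) - knot h a (i + 1)) / 2) = (h / 2 : ℝ) from by unfold knot; push_cast; ring),
    (show ((knot h a (i + 1) - knot h a (i - 2)) / 2) = (3 * h / 2 : ℝ) from by unfold knot; push_cast; ring),
    (show ((knot h a (i + 1) - knot h a (i - 1)) / 2) = (h : ℝ) from by unfold knot; push_cast; ring),
    (show ((knot h a (i + 1) - knot h a (i)) / 2) = (h / 2 : ℝ) from by unfold knot; push_cast; ring)]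
  simp only [Real.sin_neg, Real.cos_neg, Real.sin_zero, Real.cos_zero, e_sin_3h2 h, e_cos_3h2 h, e_sin_h h, e_cos_h h]
  push_cast
  ring

lemma Bval1 (h a : ℝ) (i : ℤ) : B2 h a i (knot h a (i - 1)) = B1 h a i (knot h a (i - 1)) := by
  unfold B2 B1
  rw [Bval1_num h a i]

lemma Bval2 (h a : ℝ) (i : ℤ) : B3 h a i (knot h a (i)) = B2 h a i (knot h a (i)) := by
  unfold B3 B2
  rw [Bval2_num h a i]

lemma Bval3 (h a : ℝ) (i : ℤ) : B4 h a i (knot h a (i + 1)) = B3 h a i (knot h a (i + 1)) := by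
  unfold B4 B3
  rw [Bval3_num h a i]

lemma Dval1 (h a : ℝ) (i : ℤ) : D2 h a i (knot h a (i - 1)) = D1 h a i (knot h a (i - 1)) := by
  unfold D2 D1
  rw [Dval1_num h a i]

lemma Dval2 (h a : ℝ) (i : ℤ) : D3 h a i (knot h a (i)) = D2 h a i (knot h a (i)) := by
  unfold D3 D2
  rw [Dval2_num h a i]

lemma Dval3 (h a : ℝ) (i : ℤ) : D4 h a i (knot h a (i + 1)) = D3 h a i (knot h a (i + 1)) := by
  unfold D4 D3
  rw [Dval3_num h a i]

lemma Bzero0 (h a : ℝ) (i : ℤ) : B1 h a i (knot h a (i - 2)) = 0 := by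
  unfold B1
  rw [(show ((knot h a (i - 2) - knot h a (i - 2)) / 2) = (0 : ℝ) from by unfold knot; push_cast; ring)]
  simp

lemma Bzero4 (h a : ℝ) (i : ℤ) : B4 h a i (knot h a (i + 2)) = 0 := by
  unfold B4
  rw [(show ((knot h a (i + 2) - knot h a (i + 2)) / 2) = (0 : ℝ) from by unfold knot; push_cast; ring)]
  simp

lemma Dzero0 (h a : ℝ) (i : ℤ) : D1 h a i (knot h a (i - 2)) = 0 := by
  unfold D1
  rw [(show ((knot h a (i - 2) - knot h a (i - 2)) / 2) = (0 : ℝ) from by unfold knot; push_cast; ring)]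
  simp

lemma Dzero4 (h a : ℝ) (i : ℤ) : D4 h a i (knot h a (i + 2)) = 0 := by
  unfold D4
  rw [(show ((knot h a (i + 2) - knot h a (i + 2)) / 2) = (0 : ℝ) from by unfold knot; push_cast; ring)]
  simp
lemma Deval1 (h a : ℝ) (hh : 0 < h) (hh' : h < 2 * Real.pi / 3) (i : ℤ) :
    D1 h a i (knot h a (i - 1)) = 3 / 4 * (Real.sin (3 * h / 2))⁻¹ := by
  have pi_pos := Real.pi_pos
  have hs2 : 0 < Real.sin (h / 2) := Real.sin_pos_of_pos_of_lt_pi (by linarith) (by linarith)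
  have hc2 : 0 < Real.cos (h / 2) := Real.cos_pos_of_mem_Ioo ⟨by linarith, by linarith⟩
  have hsh : 0 < Real.sin h := Real.sin_pos_of_pos_of_lt_pi (by linarith) (by linarith)
  have ht3 : 0 < Real.sin (3 * h / 2) := Real.sin_pos_of_pos_of_lt_pi (by linarith) (by linarith)
  have hT : Real.sin (3 * h / 2) ≠ 0 := ht3.ne'
  have hTh : Real.sin (h / 2) * Real.sin h * Real.sin (3 * h / 2) ≠ 0 :=
    mul_ne_zero (mul_ne_zero hs2.ne' hsh.ne') ht3.ne'
  unfold D1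
  rw [(show ((knot h a (i - 1) - knot h a (i - 2)) / 2) = (h / 2 : ℝ) from by unfold knot; push_cast; ring)]
  simp only [Real.sin_neg, Real.cos_neg, Real.sin_zero, Real.cos_zero, e_sin_3h2 h, e_cos_3h2 h, e_sin_h h, e_cos_h h] at hT hTh ⊢
  rw [← div_eq_mul_inv, div_eq_div_iff hTh hT]
  push_cast
  ring

lemma Deval3 (h a : ℝ) (hh : 0 < h) (hh' : h < 2 * Real.pi / 3) (i : ℤ) :
    D3 h a i (knot h a (i + 1)) = -(3 / 4) * (Real.sin (3 * h / 2))⁻¹ := by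
  have pi_pos := Real.pi_pos
  have hs2 : 0 < Real.sin (h / 2) := Real.sin_pos_of_pos_of_lt_pi (by linarith) (by linarith)
  have hc2 : 0 < Real.cos (h / 2) := Real.cos_pos_of_mem_Ioo ⟨by linarith, by linarith⟩
  have hsh : 0 < Real.sin h := Real.sin_pos_of_pos_of_lt_pi (by linarith) (by linarith)
  have ht3 : 0 < Real.sin (3 * h / 2) := Real.sin_pos_of_pos_of_lt_pi (by linarith) (by linarith)
  have hT : Real.sin (3 * h / 2) ≠ 0 := ht3.ne'
  have hTh : Real.sin (h / 2) * Real.sin h * Real.sin (3 * h / 2) ≠ 0 :=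
    mul_ne_zero (mul_ne_zero hs2.ne' hsh.ne') ht3.ne'
  unfold D3
  rw [(show ((knot h a (i + 1) - knot h a (i + 1)) / 2) = (0 : ℝ) from by unfold knot; push_cast; ring),
    (show ((knot h a (i + 2) - knot h a (i + 1)) / 2) = (h / 2 : ℝ) from by unfold knot; push_cast; ring),
    (show ((knot h a (i + 1) - knot h a (i - 2)) / 2) = (3 * h / 2 : ℝ) from by unfold knot; push_cast; ring),
    (show ((knot h a (i + 1) - knot h a (i - 1)) / 2) = (h : ℝ) from by unfold knot; push_cast; ring),
    (show ((knot h a (i + 1) - knot h a (i)) / 2) = (h / 2 : ℝ) from by unfold knot; push_cast; ring)]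
  simp only [Real.sin_neg, Real.cos_neg, Real.sin_zero, Real.cos_zero, e_sin_3h2 h, e_cos_3h2 h, e_sin_h h, e_cos_h h] at hT hTh ⊢
  rw [← div_eq_mul_inv, div_eq_div_iff hTh hT]
  push_cast
  ring

lemma Deval2 (h a : ℝ) (i : ℤ) : D2 h a i (knot h a i) = 0 := by
  unfold D2
  rw [(show ((knot h a (i) - knot h a (i)) / 2) = (0 : ℝ) from by unfold knot; push_cast; ring),
    (show ((knot h a (i + 1) - knot h a (i)) / 2) = (h / 2 : ℝ) from by unfold knot; push_cast; ring),
    (show ((knot h a (i + 2) - knot h a (i)) / 2) = (h : ℝ) from by unfold knot; push_cast; ring),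
    (show ((knot h a (i) - knot h a (i - 2)) / 2) = (h : ℝ) from by unfold knot; push_cast; ring),
    (show ((knot h a (i) - knot h a (i - 1)) / 2) = (h / 2 : ℝ) from by unfold knot; push_cast; ring)]
  rw [div_eq_zero_iff]
  left
  simp only [Real.sin_neg, Real.cos_neg, Real.sin_zero, Real.cos_zero, e_sin_3h2 h, e_cos_3h2 h, e_sin_h h, e_cos_h h]
  push_cast
  ring


lemma glue_s10 {F f g : ℝ → ℝ} {x d : ℝ} (hf : HasDerivAt f d x) (hg : HasDerivAt g d x)
    (hl : ∀ᶠ y in nhdsWithin x (Set.Iic x), F y = f y)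
    (hr : ∀ᶠ y in nhdsWithin x (Set.Ici x), F y = g y)
    (hfx : F x = f x) (hgx : F x = g x) : HasDerivAt F d x := by
  have h1 := (hf.hasDerivWithinAt (s := Set.Iic x)).congr_of_eventuallyEq hl hfx
  have h2 := (hg.hasDerivWithinAt (s := Set.Ici x)).congr_of_eventuallyEq hr hgx
  have h3 := h1.union h2
  rw [Set.Iic_union_Ici] at h3
  exact hasDerivWithinAt_univ.mp h3

lemma hasDerivAt_ctb (h a : ℝ) (hh : 0 < h) (i : ℤ) (x : ℝ) :
    HasDerivAt (CTB h a i) (DCTB h a i x) x := by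
  have k01 : knot h a (i - 2) < knot h a (i - 1) := knot_lt a hh (by omega)
  have k12 : knot h a (i - 1) < knot h a i := knot_lt a hh (by omega)
  have k23 : knot h a i < knot h a (i + 1) := knot_lt a hh (by omega)
  have k34 : knot h a (i + 1) < knot h a (i + 2) := knot_lt a hh (by omega)
  unfold DCTB
  rcases lt_trichotomy x (knot h a (i - 2)) with hx | hx | hx
  · rw [pick_on0 _ _ _ _ _ hh hx]
    apply (hasDerivAt_const x (0 : ℝ)).congr_of_eventuallyEq
    filter_upwards [Iio_mem_nhds hx] with y hy
    rw [ctb_eq, pick_on0 _ _ _ _ _ hh hy]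
  · subst hx
    rw [pick_on1 _ _ _ _ _ ⟨le_refl _, k01.le⟩, Dzero0 h a i]
    refine glue_s10 (f := fun _ : ℝ => (0 : ℝ)) (g := B1 h a i) (hasDerivAt_const _ (0 : ℝ)) ?_ ?_ ?_ ?_ ?_
    · have hb := hasDerivAt_B1 h a i (knot h a (i - 2)); rwa [Dzero0] at hb
    · filter_upwards [self_mem_nhdsWithin] with y hy
      rcases eq_or_lt_of_le (Set.mem_Iic.mp hy) with rfl | hy'
      · rw [ctb_eq, pick_on1 _ _ _ _ _ ⟨le_refl _, k01.le⟩, Bzero0]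
      · rw [ctb_eq, pick_on0 _ _ _ _ _ hh hy']
    · filter_upwards [Ico_mem_nhdsGE k01] with y hy
      rw [ctb_eq, pick_on1 _ _ _ _ _ ⟨hy.1, hy.2.le⟩]
    · rw [ctb_eq, pick_on1 _ _ _ _ _ ⟨le_refl _, k01.le⟩, Bzero0]
    · rw [ctb_eq, pick_on1 _ _ _ _ _ ⟨le_refl _, k01.le⟩]
  rcases lt_trichotomy x (knot h a (i - 1)) with hx1 | hx1 | hx1
  · rw [pick_on1 _ _ _ _ _ ⟨hx.le, hx1.le⟩]
    apply (hasDerivAt_B1 h a i x).congr_of_eventuallyEq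
    filter_upwards [Ioo_mem_nhds hx hx1] with y hy
    rw [ctb_eq, pick_on1 _ _ _ _ _ ⟨hy.1.le, hy.2.le⟩]
  · subst hx1
    rw [pick_on1 _ _ _ _ _ ⟨k01.le, le_refl _⟩]
    refine glue_s10 (g := B2 h a i) (hasDerivAt_B1 h a i _) ?_ ?_ ?_ ?_ ?_
    · have hb := hasDerivAt_B2 h a i (knot h a (i - 1)); rwa [Dval1] at hb
    · filter_upwards [Ioc_mem_nhdsLE k01] with y hy
      rw [ctb_eq, pick_on1 _ _ _ _ _ ⟨hy.1.le, hy.2⟩]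
    · filter_upwards [Ico_mem_nhdsGE k12] with y hy
      rcases eq_or_lt_of_le hy.1 with rfl | hy'
      · rw [ctb_eq, pick_on1 _ _ _ _ _ ⟨k01.le, le_refl _⟩]
        exact (Bval1 h a i).symm
      · rw [ctb_eq, pick_on2 _ _ _ _ _ hh hy' hy.2.le]
    · rw [ctb_eq, pick_on1 _ _ _ _ _ ⟨k01.le, le_refl _⟩]
    · rw [ctb_eq, pick_on1 _ _ _ _ _ ⟨k01.le, le_refl _⟩]
      exact (Bval1 h a i).symm
  rcases lt_trichotomy x (knot h a i) with hx2 | hx2 | hx2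
  · rw [pick_on2 _ _ _ _ _ hh hx1 hx2.le]
    apply (hasDerivAt_B2 h a i x).congr_of_eventuallyEq
    filter_upwards [Ioo_mem_nhds hx1 hx2] with y hy
    rw [ctb_eq, pick_on2 _ _ _ _ _ hh hy.1 hy.2.le]
  · subst hx2
    rw [pick_on2 _ _ _ _ _ hh k12 (le_refl _)]
    refine glue_s10 (g := B3 h a i) (hasDerivAt_B2 h a i _) ?_ ?_ ?_ ?_ ?_
    · have hb := hasDerivAt_B3 h a i (knot h a i); rwa [Dval2] at hb
    · filter_upwards [Ioc_mem_nhdsLE k12] with y hy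
      rw [ctb_eq, pick_on2 _ _ _ _ _ hh hy.1 hy.2]
    · filter_upwards [Ico_mem_nhdsGE k23] with y hy
      rcases eq_or_lt_of_le hy.1 with rfl | hy'
      · rw [ctb_eq, pick_on2 _ _ _ _ _ hh k12 (le_refl _)]
        exact (Bval2 h a i).symm
      · rw [ctb_eq, pick_on3 _ _ _ _ _ hh hy' hy.2.le]
    · rw [ctb_eq, pick_on2 _ _ _ _ _ hh k12 (le_refl _)]
    · rw [ctb_eq, pick_on2 _ _ _ _ _ hh k12 (le_refl _)]
      exact (Bval2 h a i).symm
  rcases lt_trichotomy x (knot h a (i + 1)) with hx3 | hx3 | hx3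
  · rw [pick_on3 _ _ _ _ _ hh hx2 hx3.le]
    apply (hasDerivAt_B3 h a i x).congr_of_eventuallyEq
    filter_upwards [Ioo_mem_nhds hx2 hx3] with y hy
    rw [ctb_eq, pick_on3 _ _ _ _ _ hh hy.1 hy.2.le]
  · subst hx3
    rw [pick_on3 _ _ _ _ _ hh k23 (le_refl _)]
    refine glue_s10 (g := B4 h a i) (hasDerivAt_B3 h a i _) ?_ ?_ ?_ ?_ ?_
    · have hb := hasDerivAt_B4 h a i (knot h a (i + 1)); rwa [Dval3] at hb
    · filter_upwards [Ioc_mem_nhdsLE k23] with y hy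
      rw [ctb_eq, pick_on3 _ _ _ _ _ hh hy.1 hy.2]
    · filter_upwards [Ico_mem_nhdsGE k34] with y hy
      rcases eq_or_lt_of_le hy.1 with rfl | hy'
      · rw [ctb_eq, pick_on3 _ _ _ _ _ hh k23 (le_refl _)]
        exact (Bval3 h a i).symm
      · rw [ctb_eq, pick_on4 _ _ _ _ _ hh hy' hy.2.le]
    · rw [ctb_eq, pick_on3 _ _ _ _ _ hh k23 (le_refl _)]
    · rw [ctb_eq, pick_on3 _ _ _ _ _ hh k23 (le_refl _)]
      exact (Bval3 h a i).symm
  rcases lt_trichotomy x (knot h a (i + 2)) with hx4 | hx4 | hx4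
  · rw [pick_on4 _ _ _ _ _ hh hx3 hx4.le]
    apply (hasDerivAt_B4 h a i x).congr_of_eventuallyEq
    filter_upwards [Ioo_mem_nhds hx3 hx4] with y hy
    rw [ctb_eq, pick_on4 _ _ _ _ _ hh hy.1 hy.2.le]
  · subst hx4
    rw [pick_on4 _ _ _ _ _ hh k34 (le_refl _), Dzero4 h a i]
    refine glue_s10 (f := B4 h a i) (g := fun _ : ℝ => (0 : ℝ)) ?_ (hasDerivAt_const _ (0 : ℝ)) ?_ ?_ ?_ ?_
    · have hb := hasDerivAt_B4 h a i (knot h a (i + 2)); rwa [Dzero4] at hb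
    · filter_upwards [Ioc_mem_nhdsLE k34] with y hy
      rw [ctb_eq, pick_on4 _ _ _ _ _ hh hy.1 hy.2]
    · filter_upwards [Ico_mem_nhdsGE (lt_add_one _)] with y hy
      rcases eq_or_lt_of_le hy.1 with rfl | hy'
      · rw [ctb_eq, pick_on4 _ _ _ _ _ hh k34 (le_refl _), Bzero4]
      · rw [ctb_eq, pick_on5 _ _ _ _ _ hh hy']
    · rw [ctb_eq, pick_on4 _ _ _ _ _ hh k34 (le_refl _)]
    · rw [ctb_eq, pick_on4 _ _ _ _ _ hh k34 (le_refl _), Bzero4]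
  · rw [pick_on5 _ _ _ _ _ hh hx4]
    apply (hasDerivAt_const x (0 : ℝ)).congr_of_eventuallyEq
    filter_upwards [Ioi_mem_nhds hx4] with y hy
    rw [ctb_eq, pick_on5 _ _ _ _ _ hh hy]

lemma DCTB_knot (h a : ℝ) (hh : 0 < h) (hh' : h < 2 * Real.pi / 3) (i m : ℤ) :
    DCTB h a i (knot h a m) =
      if i = m + 1 then 3 / 4 * (Real.sin (3 * h / 2))⁻¹
      else if i = m - 1 then -(3 / 4) * (Real.sin (3 * h / 2))⁻¹ else 0 := by
  have k01 : knot h a (i - 2) < knot h a (i - 1) := knot_lt a hh (by omega)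
  have k12 : knot h a (i - 1) < knot h a i := knot_lt a hh (by omega)
  have k23 : knot h a i < knot h a (i + 1) := knot_lt a hh (by omega)
  have k34 : knot h a (i + 1) < knot h a (i + 2) := knot_lt a hh (by omega)
  unfold DCTB
  by_cases h1 : i = m + 1
  · rw [if_pos h1, show knot h a m = knot h a (i - 1) from congrArg (knot h a) (by omega),
      pick_on1 _ _ _ _ _ ⟨k01.le, le_refl _⟩]
    exact Deval1 h a hh hh' i
  rw [if_neg h1]
  by_cases h2 : i = m - 1
  · rw [if_pos h2, show knot h a m = knot h a (i + 1) from congrArg (knot h a) (by omega),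
      pick_on3 _ _ _ _ _ hh k23 (le_refl _)]
    exact Deval3 h a hh hh' i
  rw [if_neg h2]
  by_cases h3 : i = m
  · rw [show knot h a m = knot h a i from congrArg (knot h a) (by omega),
      pick_on2 _ _ _ _ _ hh k12 (le_refl _)]
    exact Deval2 h a i
  by_cases h4 : i = m + 2
  · rw [show knot h a m = knot h a (i - 2) from congrArg (knot h a) (by omega),
      pick_on1 _ _ _ _ _ ⟨le_refl _, k01.le⟩]
    exact Dzero0 h a i
  by_cases h5 : i = m - 2
  · rw [show knot h a m = knot h a (i + 2) from congrArg (knot h a) (by omega),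
      pick_on4 _ _ _ _ _ hh k34 (le_refl _)]
    exact Dzero4 h a i
  by_cases h6 : i < m
  · exact pick_on5 _ _ _ _ _ hh (knot_lt a hh (by omega))
  · exact pick_on0 _ _ _ _ _ hh (knot_lt a hh (by omega))

/-- The spline expansion `U_N = Σ_{i=−1}^{N+1} δ_i·CTB_i` is differentiable and
`U_N'(x_m) = β₁δ_{m−1} + β₂δ_{m+1}` with `β₁ = −(3/4)csc(3h/2)`,
`β₂ = (3/4)csc(3h/2)`, for `0 ≤ m ≤ N`. -/
theorem spline_expansion_nodal_deriv (h a : ℝ) (hh : 0 < h) (hh' : h < 2 * Real.pi / 3)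
    (N : ℕ) (hN : 1 ≤ N) (δ : ℤ → ℝ) (U : ℝ → ℝ)
    (hU : U = fun x => ∑ i ∈ Finset.Icc (-1 : ℤ) ((N : ℤ) + 1), δ i * CTB h a i x) :
    Differentiable ℝ U ∧
    ∀ m : ℤ, 0 ≤ m → m ≤ (N : ℤ) →
      deriv U (knot h a m) =
        (-(3 / 4) * (Real.sin (3 * h / 2))⁻¹) * δ (m - 1) +
        (3 / 4 * (Real.sin (3 * h / 2))⁻¹) * δ (m + 1) := by
  subst hU
  have key : ∀ x : ℝ,
      HasDerivAt (fun x => ∑ i ∈ Finset.Icc (-1 : ℤ) ((N : ℤ) + 1), δ i * CTB h a i x)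
        (∑ i ∈ Finset.Icc (-1 : ℤ) ((N : ℤ) + 1), δ i * DCTB h a i x) x := by
    intro x
    exact HasDerivAt.fun_sum fun i _ => (hasDerivAt_ctb h a hh i x).const_mul (δ i)
  refine ⟨fun x => (key x).differentiableAt, ?_⟩
  intro m hm0 hm1
  rw [(key (knot h a m)).deriv]
  have step : ∀ i ∈ Finset.Icc (-1 : ℤ) ((N : ℤ) + 1),
      δ i * DCTB h a i (knot h a m) =
        (if i = m - 1 then -(3 / 4) * (Real.sin (3 * h / 2))⁻¹ * δ i else 0) +
        (if i = m + 1 then 3 / 4 * (Real.sin (3 * h / 2))⁻¹ * δ i else 0) := by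
    intro i _
    rw [DCTB_knot h a hh hh' i m]
    by_cases h1 : i = m + 1
    · rw [if_pos h1, if_neg (by omega), if_pos h1]
      ring
    · rw [if_neg h1, if_neg h1]
      by_cases h2 : i = m - 1
      · rw [if_pos h2, if_pos h2]
        ring
      · rw [if_neg h2, if_neg h2]
        ring
  rw [Finset.sum_congr rfl step, Finset.sum_add_distrib,
    Finset.sum_ite_eq' _ (m - 1) (fun i => -(3 / 4) * (Real.sin (3 * h / 2))⁻¹ * δ i),
    Finset.sum_ite_eq' _ (m + 1) (fun i => 3 / 4 * (Real.sin (3 * h / 2))⁻¹ * δ i),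
    if_pos (by rw [Finset.mem_Icc]; omega), if_pos (by rw [Finset.mem_Icc]; omega)]
end

section
/- Let N ≥ 1, let δ_{−1}, δ_0, …, δ_{N+1} be real parameters, and let U_N(x) = Σ_{i=−1}^{N+1} δ_i·CTB_i(x). Then U_N is twice differentiable and for every m with 0 ≤ m ≤ N, U_N''(x_m) = γ₁·δ_{m−1} + γ₂·δ_m + γ₁·δ_{m+1}, where γ₁ = 3·(1 + 3·cos(h))·csc²(h/2) / (16·(2·cos(h/2) + cos(3h/2))) and γ₂ = −3·cot²(h/2)/(2 + 4·cos(h)). -/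
set_option maxHeartbeats 1000000

namespace SplineAux

open Real

/-- truncated `sin³` kernel -/
noncomputable def Gf (t : ℝ) : ℝ := if t ≤ 0 then 0 else Real.sin (t/2) ^ 3
noncomputable def Gf1 (t : ℝ) : ℝ := if t ≤ 0 then 0 else (3/2) * Real.sin (t/2) ^ 2 * Real.cos (t/2)
noncomputable def Gf2 (t : ℝ) : ℝ :=
  if t ≤ 0 then 0 else (3/2) * Real.sin (t/2) * Real.cos (t/2) ^ 2 - (3/4) * Real.sin (t/2) ^ 3

noncomputable def cA (h : ℝ) : ℝ := -2 * Real.cos (h/2) - 2 * Real.cos (3*h/2)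
noncomputable def cB (h : ℝ) : ℝ := 2 + 2 * Real.cos h + 2 * Real.cos (2*h)

noncomputable def Phi (h a : ℝ) (i : ℤ) (x : ℝ) : ℝ :=
  (Gf (x - knot h a (i-2)) + cA h * Gf (x - knot h a (i-1)) + cB h * Gf (x - knot h a i)
    + cA h * Gf (x - knot h a (i+1)) + Gf (x - knot h a (i+2)))
  / (Real.sin (h / 2) * Real.sin h * Real.sin (3 * h / 2))
noncomputable def Phi1 (h a : ℝ) (i : ℤ) (x : ℝ) : ℝ :=
  (Gf1 (x - knot h a (i-2)) + cA h * Gf1 (x - knot h a (i-1)) + cB h * Gf1 (x - knot h a i)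
    + cA h * Gf1 (x - knot h a (i+1)) + Gf1 (x - knot h a (i+2)))
  / (Real.sin (h / 2) * Real.sin h * Real.sin (3 * h / 2))
noncomputable def Phi2 (h a : ℝ) (i : ℤ) (x : ℝ) : ℝ :=
  (Gf2 (x - knot h a (i-2)) + cA h * Gf2 (x - knot h a (i-1)) + cB h * Gf2 (x - knot h a i)
    + cA h * Gf2 (x - knot h a (i+1)) + Gf2 (x - knot h a (i+2)))
  / (Real.sin (h / 2) * Real.sin h * Real.sin (3 * h / 2))

lemma Gf_of_nonpos {t : ℝ} (ht : t ≤ 0) : Gf t = 0 := if_pos ht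
lemma Gf_of_nonneg {t : ℝ} (ht : 0 ≤ t) : Gf t = Real.sin (t/2) ^ 3 := by
  rcases ht.eq_or_lt with h|h
  · simp [Gf, ← h]
  · exact if_neg (not_le.2 h)
lemma Gf2_of_nonpos {t : ℝ} (ht : t ≤ 0) : Gf2 t = 0 := if_pos ht
lemma Gf2_of_nonneg {t : ℝ} (ht : 0 ≤ t) :
    Gf2 t = (3/2) * Real.sin (t/2) * Real.cos (t/2) ^ 2 - (3/4) * Real.sin (t/2) ^ 3 := by
  rcases ht.eq_or_lt with h|h
  · simp [Gf2, ← h]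
  · exact if_neg (not_le.2 h)

lemma hasDerivAt_half (t : ℝ) : HasDerivAt (fun s : ℝ => s/2) (1/2) t :=
  (hasDerivAt_id t).div_const 2

lemma hasDerivAt_sin_half (t : ℝ) :
    HasDerivAt (fun s : ℝ => Real.sin (s/2)) (Real.cos (t/2) * (1/2)) t :=
  by have := (Real.hasDerivAt_sin (t/2)).comp t (hasDerivAt_half t); exact this

lemma hasDerivAt_cos_half (t : ℝ) :
    HasDerivAt (fun s : ℝ => Real.cos (s/2)) (-Real.sin (t/2) * (1/2)) t :=
  by have := (Real.hasDerivAt_cos (t/2)).comp t (hasDerivAt_half t); exact this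

lemma hasDerivAt_sin3 (t : ℝ) :
    HasDerivAt (fun s : ℝ => Real.sin (s/2) ^ 3)
      ((3/2) * Real.sin (t/2) ^ 2 * Real.cos (t/2)) t := by
  have h := (hasDerivAt_sin_half t).fun_pow 3
  refine h.congr_deriv ?_
  push_cast
  ring

lemma hasDerivAt_smooth2 (t : ℝ) :
    HasDerivAt (fun s : ℝ => (3/2) * Real.sin (s/2) ^ 2 * Real.cos (s/2))
      ((3/2) * Real.sin (t/2) * Real.cos (t/2) ^ 2 - (3/4) * Real.sin (t/2) ^ 3) t := by
  have h1 := ((hasDerivAt_sin_half t).fun_pow 2).const_mul (3/2 : ℝ)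
  have h := h1.fun_mul (hasDerivAt_cos_half t)
  refine h.congr_deriv ?_
  push_cast
  ring

lemma Gf_hasDeriv (t : ℝ) : HasDerivAt Gf (Gf1 t) t := by
  rcases lt_trichotomy t 0 with ht|rfl|ht
  · have hval : Gf1 t = 0 := if_pos ht.le
    rw [hval]
    have he : Gf =ᶠ[nhds t] (fun _ => (0:ℝ)) := by
      filter_upwards [Iio_mem_nhds ht] with s hs
      exact if_pos (le_of_lt hs)
    exact (hasDerivAt_const t (0:ℝ)).congr_of_eventuallyEq he
  · have hIic : HasDerivWithinAt Gf 0 (Set.Iic 0) 0 := by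
      refine ((hasDerivAt_const (0:ℝ) (0:ℝ)).hasDerivWithinAt).congr ?_ ?_
      · intro s hs; exact if_pos hs
      · exact if_pos le_rfl
    have hIci : HasDerivWithinAt Gf 0 (Set.Ici 0) 0 := by
      have h0 := hasDerivAt_sin3 0
      have hz : (3/2 : ℝ) * Real.sin (0/2) ^ 2 * Real.cos (0/2) = 0 := by simp
      rw [hz] at h0
      refine h0.hasDerivWithinAt.congr ?_ ?_
      · intro s hs
        exact Gf_of_nonneg hs
      · simp [Gf]
    have hu := hIic.union hIci
    rw [Set.Iic_union_Ici] at hu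
    have := hu.hasDerivAt (by simp)
    simpa [Gf1] using this
  · have hval : Gf1 t = (3/2) * Real.sin (t/2) ^ 2 * Real.cos (t/2) := if_neg (not_le.2 ht)
    rw [hval]
    have he : Gf =ᶠ[nhds t] (fun s => Real.sin (s/2) ^ 3) := by
      filter_upwards [Ioi_mem_nhds ht] with s hs
      exact if_neg (not_le.2 hs)
    exact (hasDerivAt_sin3 t).congr_of_eventuallyEq he

lemma Gf1_hasDeriv (t : ℝ) : HasDerivAt Gf1 (Gf2 t) t := by
  rcases lt_trichotomy t 0 with ht|rfl|ht
  · have hval : Gf2 t = 0 := if_pos ht.le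
    rw [hval]
    have he : Gf1 =ᶠ[nhds t] (fun _ => (0:ℝ)) := by
      filter_upwards [Iio_mem_nhds ht] with s hs
      exact if_pos (le_of_lt hs)
    exact (hasDerivAt_const t (0:ℝ)).congr_of_eventuallyEq he
  · have hIic : HasDerivWithinAt Gf1 0 (Set.Iic 0) 0 := by
      refine ((hasDerivAt_const (0:ℝ) (0:ℝ)).hasDerivWithinAt).congr ?_ ?_
      · intro s hs; exact if_pos hs
      · exact if_pos le_rfl
    have hIci : HasDerivWithinAt Gf1 0 (Set.Ici 0) 0 := by
      have h0 := hasDerivAt_smooth2 0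
      have hz : (3/2 : ℝ) * Real.sin (0/2) * Real.cos (0/2) ^ 2 - (3/4) * Real.sin (0/2) ^ 3 = 0 := by
        simp
      rw [hz] at h0
      refine h0.hasDerivWithinAt.congr ?_ ?_
      · intro s hs
        rcases (Set.mem_Ici.mp hs).eq_or_lt with h|h
        · simp [Gf1, ← h]
        · exact if_neg (not_le.2 h)
      · simp [Gf1]
    have hu := hIic.union hIci
    rw [Set.Iic_union_Ici] at hu
    have := hu.hasDerivAt (by simp)
    simpa [Gf2] using this
  · have hval : Gf2 t = (3/2) * Real.sin (t/2) * Real.cos (t/2) ^ 2 - (3/4) * Real.sin (t/2) ^ 3 :=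
      if_neg (not_le.2 ht)
    rw [hval]
    have he : Gf1 =ᶠ[nhds t] (fun s => (3/2) * Real.sin (s/2) ^ 2 * Real.cos (s/2)) := by
      filter_upwards [Ioi_mem_nhds ht] with s hs
      exact if_neg (not_le.2 hs)
    exact (hasDerivAt_smooth2 t).congr_of_eventuallyEq he

lemma Phi_hasDeriv (h a : ℝ) (i : ℤ) (x : ℝ) : HasDerivAt (Phi h a i) (Phi1 h a i x) x := by
  have gd : ∀ c : ℝ, HasDerivAt (fun y : ℝ => Gf (y - c)) (Gf1 (x - c)) x := by
    intro c
    have := (Gf_hasDeriv (x - c)).comp x ((hasDerivAt_id x).sub_const c)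
    simpa [Function.comp_def] using this
  unfold Phi Phi1
  exact (((((gd _).add ((gd _).const_mul (cA h))).add ((gd _).const_mul (cB h))).add
    ((gd _).const_mul (cA h))).add (gd _)).div_const _

lemma Phi1_hasDeriv (h a : ℝ) (i : ℤ) (x : ℝ) : HasDerivAt (Phi1 h a i) (Phi2 h a i x) x := by
  have gd : ∀ c : ℝ, HasDerivAt (fun y : ℝ => Gf1 (y - c)) (Gf2 (x - c)) x := by
    intro c
    have := (Gf1_hasDeriv (x - c)).comp x ((hasDerivAt_id x).sub_const c)
    simpa [Function.comp_def] using this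
  unfold Phi1 Phi2
  exact (((((gd _).add ((gd _).const_mul (cA h))).add ((gd _).const_mul (cB h))).add
    ((gd _).const_mul (cA h))).add (gd _)).div_const _

lemma keyI2 (u v : ℝ) :
    Real.sin (u+(v+v)) * (Real.sin (u+(v+v)) * Real.sin (-u) + Real.sin (v-u) * Real.sin (u+v))
      + Real.sin (v+v-u) * Real.sin (u+v) ^ 2
    = Real.sin (u+(v+v)) ^ 3
      + (-2 * Real.cos v - 2 * Real.cos (v+v+v)) * Real.sin (u+v) ^ 3 := by
  simp only [Real.sin_add, Real.cos_add, Real.sin_sub, Real.cos_sub, Real.sin_neg, Real.cos_neg]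
  linear_combination ((6:ℝ)*Real.cos u*Real.sin v^3*Real.cos v + (-6:ℝ)*Real.cos u*Real.sin v^3*Real.cos v^3 + (-6:ℝ)*Real.cos u*Real.sin v^5*Real.cos v + (-1:ℝ)*Real.sin u*Real.cos v^4 + (1:ℝ)*Real.sin u*Real.cos v^6 + (4:ℝ)*Real.sin u*Real.sin v^2*Real.cos v^2 + (-3:ℝ)*Real.sin u*Real.sin v^2*Real.cos v^4 + (-1:ℝ)*Real.sin u*Real.sin v^4 + (-3:ℝ)*Real.sin u*Real.sin v^4*Real.cos v^2 + (1:ℝ)*Real.sin u*Real.sin v^6) * Real.sin_sq_add_cos_sq u + ((-6:ℝ)*Real.cos u*Real.sin v^3*Real.cos v + (1:ℝ)*Real.sin u*Real.cos v^4 + (-4:ℝ)*Real.sin u*Real.sin v^2*Real.cos v^2 + (1:ℝ)*Real.sin u*Real.sin v^4 + (-1:ℝ)*Real.sin u*Real.cos u^2*Real.cos v^4 + (-2:ℝ)*Real.sin u*Real.cos u^2*Real.sin v^2*Real.cos v^2 + (-1:ℝ)*Real.sin u*Real.cos u^2*Real.sin v^4) * Real.sin_sq_add_cos_sq v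

lemma keyI3 (u v : ℝ) :
    Real.sin (u+(v+v)) * Real.sin (v-u) ^ 2
      + Real.sin (v+v-u) * (Real.sin (u+v) * Real.sin (v-u) + Real.sin (v+v-u) * Real.sin u)
    = Real.sin (u+(v+v)) ^ 3
      + (-2 * Real.cos v - 2 * Real.cos (v+v+v)) * Real.sin (u+v) ^ 3
      + (2 + 2 * Real.cos (v+v) + 2 * Real.cos (v+v+(v+v))) * Real.sin u ^ 3 := by
  simp only [Real.sin_add, Real.cos_add, Real.sin_sub, Real.cos_sub, Real.sin_neg, Real.cos_neg]
  linear_combination ((6:ℝ)*Real.cos u*Real.sin v^3*Real.cos v + (-6:ℝ)*Real.cos u*Real.sin v^3*Real.cos v^3 + (-6:ℝ)*Real.cos u*Real.sin v^5*Real.cos v + (-2:ℝ)*Real.sin u + (-2:ℝ)*Real.sin u*Real.cos v^2 + (3:ℝ)*Real.sin u*Real.cos v^4 + (1:ℝ)*Real.sin u*Real.cos v^6 + (2:ℝ)*Real.sin u*Real.sin v^2 + (8:ℝ)*Real.sin u*Real.sin v^2*Real.cos v^2 + (-3:ℝ)*Real.sin u*Real.sin v^2*Real.cos v^4 + (-1:ℝ)*Real.sin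 u*Real.sin v^4 + (-3:ℝ)*Real.sin u*Real.sin v^4*Real.cos v^2 + (1:ℝ)*Real.sin u*Real.sin v^6) * Real.sin_sq_add_cos_sq u + ((-6:ℝ)*Real.cos u*Real.sin v^3*Real.cos v + (2:ℝ)*Real.sin u + (4:ℝ)*Real.sin u*Real.cos v^2 + (1:ℝ)*Real.sin u*Real.cos v^4 + (-4:ℝ)*Real.sin u*Real.sin v^2*Real.cos v^2 + (1:ℝ)*Real.sin u*Real.sin v^4 + (-2:ℝ)*Real.sin u*Real.cos u^2 + (-4:ℝ)*Real.sin u*Real.cos u^2*Real.cos v^2 + (-1:ℝ)*Real.sin u*Real.cos u^2*Real.cos v^4 + (-2:ℝ)*Real.sin u*Real.cos u^2*Real.sin v^2*Real.cos v^2 + (-1:ℝ)*Real.sin u*Real.cos u^2*Real.sin v^4) * Real.sin_sq_add_cos_sq v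

lemma keyI4 (u v : ℝ) :
    Real.sin (v+v-u) ^ 3
    = Real.sin (u+(v+v)) ^ 3
      + (-2 * Real.cos v - 2 * Real.cos (v+v+v)) * Real.sin (u+v) ^ 3
      + (2 + 2 * Real.cos (v+v) + 2 * Real.cos (v+v+(v+v))) * Real.sin u ^ 3
      + (-2 * Real.cos v - 2 * Real.cos (v+v+v)) * Real.sin (u-v) ^ 3 := by
  simp only [Real.sin_add, Real.cos_add, Real.sin_sub, Real.cos_sub, Real.sin_neg, Real.cos_neg]
  linear_combination ((-2:ℝ)*Real.sin u + (-2:ℝ)*Real.sin u*Real.cos v^2 + (2:ℝ)*Real.sin u*Real.cos v^4 + (2:ℝ)*Real.sin u*Real.cos v^6 + (2:ℝ)*Real.sin u*Real.sin v^2 + (12:ℝ)*Real.sin u*Real.sin v^2*Real.cos v^2 + (-6:ℝ)*Real.sin u*Real.sin v^2*Real.cos v^4 + (-2:ℝ)*Real.sin u*Real.sin v^4 + (-6:ℝ)*Real.sin u*Real.sin v^4*Real.cos v^2 + (2:ℝ)*Real.sin u*Real.sin v^6) * Real.sin_sq_add_cos_sq u + ((2:ℝ)*Real.sin u + (4:ℝ)*Real.sin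 u*Real.cos v^2 + (2:ℝ)*Real.sin u*Real.cos v^4 + (-8:ℝ)*Real.sin u*Real.sin v^2*Real.cos v^2 + (2:ℝ)*Real.sin u*Real.sin v^4 + (-2:ℝ)*Real.sin u*Real.cos u^2 + (-4:ℝ)*Real.sin u*Real.cos u^2*Real.cos v^2 + (-2:ℝ)*Real.sin u*Real.cos u^2*Real.cos v^4 + (-4:ℝ)*Real.sin u*Real.cos u^2*Real.sin v^2*Real.cos v^2 + (-2:ℝ)*Real.sin u*Real.cos u^2*Real.sin v^4) * Real.sin_sq_add_cos_sq v

lemma keyI5 (u v : ℝ) :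
    Real.sin (u+(v+v)) ^ 3
      + (-2 * Real.cos v - 2 * Real.cos (v+v+v)) * Real.sin (u+v) ^ 3
      + (2 + 2 * Real.cos (v+v) + 2 * Real.cos (v+v+(v+v))) * Real.sin u ^ 3
      + (-2 * Real.cos v - 2 * Real.cos (v+v+v)) * Real.sin (u-v) ^ 3
      + Real.sin (u-(v+v)) ^ 3 = 0 := by
  simp only [Real.sin_add, Real.cos_add, Real.sin_sub, Real.cos_sub, Real.sin_neg, Real.cos_neg]
  linear_combination ((2:ℝ)*Real.sin u + (2:ℝ)*Real.sin u*Real.cos v^2 + (-2:ℝ)*Real.sin u*Real.cos v^4 + (-2:ℝ)*Real.sin u*Real.cos v^6 + (-2:ℝ)*Real.sin u*Real.sin v^2 + (-12:ℝ)*Real.sin u*Real.sin v^2*Real.cos v^2 + (6:ℝ)*Real.sin u*Real.sin v^2*Real.cos v^4 + (2:ℝ)*Real.sin u*Real.sin v^4 + (6:ℝ)*Real.sin u*Real.sin v^4*Real.cos v^2 + (-2:ℝ)*Real.sin u*Real.sin v^6) * Real.sin_sq_add_cos_sq u + ((-2:ℝ)*Real.sin u + (-4:ℝ)*Real.sin u*Real.cos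 v^2 + (-2:ℝ)*Real.sin u*Real.cos v^4 + (8:ℝ)*Real.sin u*Real.sin v^2*Real.cos v^2 + (-2:ℝ)*Real.sin u*Real.sin v^4 + (2:ℝ)*Real.sin u*Real.cos u^2 + (4:ℝ)*Real.sin u*Real.cos u^2*Real.cos v^2 + (2:ℝ)*Real.sin u*Real.cos u^2*Real.cos v^4 + (4:ℝ)*Real.sin u*Real.cos u^2*Real.sin v^2*Real.cos v^2 + (2:ℝ)*Real.sin u*Real.cos u^2*Real.sin v^4) * Real.sin_sq_add_cos_sq v

lemma keyTF (p v : ℝ) :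
    ((3/2) * Real.sin p * Real.cos p ^ 2 - (3/4) * Real.sin p ^ 3)
    + (-2 * Real.cos v - 2 * Real.cos (v+v+v)) *
        ((3/2) * Real.sin (p-v) * Real.cos (p-v) ^ 2 - (3/4) * Real.sin (p-v) ^ 3)
    + (2 + 2 * Real.cos (v+v) + 2 * Real.cos (v+v+(v+v))) *
        ((3/2) * Real.sin (p-(v+v)) * Real.cos (p-(v+v)) ^ 2 - (3/4) * Real.sin (p-(v+v)) ^ 3)
    + (-2 * Real.cos v - 2 * Real.cos (v+v+v)) *
        ((3/2) * Real.sin (p-(v+v+v)) * Real.cos (p-(v+v+v)) ^ 2 - (3/4) * Real.sin (p-(v+v+v)) ^ 3)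
    + ((3/2) * Real.sin (p-(v+v+(v+v))) * Real.cos (p-(v+v+(v+v))) ^ 2
        - (3/4) * Real.sin (p-(v+v+(v+v))) ^ 3) = 0 := by
  simp only [Real.sin_add, Real.cos_add, Real.sin_sub, Real.cos_sub, Real.sin_neg, Real.cos_neg]
  linear_combination ((-21/2:ℝ)*Real.cos p*Real.sin v*Real.cos v^3 + (21/2:ℝ)*Real.cos p*Real.sin v*Real.cos v^5 + (21:ℝ)*Real.cos p*Real.sin v*Real.cos v^7 + (-21/2:ℝ)*Real.cos p*Real.sin v*Real.cos v^9 + (-21/2:ℝ)*Real.cos p*Real.sin v*Real.cos v^11 + (3:ℝ)*Real.cos p*Real.sin v^3*Real.cos v + (-63/2:ℝ)*Real.cos p*Real.sin v^3*Real.cos v^3 + (-87:ℝ)*Real.cos p*Real.sin v^3*Real.cos v^5 + (177/2:ℝ)*Real.cos p*Real.sin v^3*Real.cos v^7 + (6:ℝ)*Real.cos p*Real.sin v^3*Real.cos v^9 + (12:ℝ)*Real.cos p*Real.sin v^5*Real.cos v + (87:ℝ)*Real.cos p*Real.sin v^5*Real.cos v^3 + (21/2:ℝ)*Real.cos p*Real.sin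 v^5*Real.cos v^5 + (69:ℝ)*Real.cos p*Real.sin v^5*Real.cos v^7 + (-21:ℝ)*Real.cos p*Real.sin v^7*Real.cos v + (-141/2:ℝ)*Real.cos p*Real.sin v^7*Real.cos v^3 + (66:ℝ)*Real.cos p*Real.sin v^7*Real.cos v^5 + (18:ℝ)*Real.cos p*Real.sin v^9*Real.cos v + (3/2:ℝ)*Real.cos p*Real.sin v^9*Real.cos v^3 + (-12:ℝ)*Real.cos p*Real.sin v^11*Real.cos v + (-3/4:ℝ)*Real.sin p + (3/2:ℝ)*Real.sin p*Real.cos v^4 + (-3/2:ℝ)*Real.sin p*Real.cos v^8 + (3/4:ℝ)*Real.sin p*Real.cos v^12 + (-3:ℝ)*Real.sin p*Real.sin v^2*Real.cos v^2 + (9:ℝ)*Real.sin p*Real.sin v^2*Real.cos v^4 + (18:ℝ)*Real.sin p*Real.sin v^2*Real.cos v^6 + (-15:ℝ)*Real.sin p*Real.sin v^2*Real.cos v^8 + (-15/2:ℝ)*Real.sin p*Real.sin v^2*Real.cos v^10 + (-15/2:ℝ)*Real.sin p*Real.sin v^4*Real.cos v^2 + (-33:ℝ)*Real.sin p*Real.sin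 v^4*Real.cos v^4 + (45/2:ℝ)*Real.sin p*Real.sin v^4*Real.cos v^6 + (-57/4:ℝ)*Real.sin p*Real.sin v^4*Real.cos v^8 + (3/2:ℝ)*Real.sin p*Real.sin v^6 + (18:ℝ)*Real.sin p*Real.sin v^6*Real.cos v^2 + (39/2:ℝ)*Real.sin p*Real.sin v^6*Real.cos v^4 + (9:ℝ)*Real.sin p*Real.sin v^6*Real.cos v^6 + (-3/2:ℝ)*Real.sin p*Real.sin v^8 + (-33/2:ℝ)*Real.sin p*Real.sin v^8*Real.cos v^2 + (105/4:ℝ)*Real.sin p*Real.sin v^8*Real.cos v^4 + (3/2:ℝ)*Real.sin p*Real.sin v^10 + (21/2:ℝ)*Real.sin p*Real.sin v^10*Real.cos v^2 + (-3/4:ℝ)*Real.sin p*Real.sin v^12) * Real.sin_sq_add_cos_sq p + ((21/2:ℝ)*Real.cos p*Real.sin v*Real.cos v^3 + (-21:ℝ)*Real.cos p*Real.sin v*Real.cos v^7 + (-21/2:ℝ)*Real.cos p*Real.sin v*Real.cos v^9 + (-3:ℝ)*Real.cos p*Real.sin v^3*Real.cos v + (39:ℝ)*Real.cos p*Real.sin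 v^3*Real.cos v^3 + (126:ℝ)*Real.cos p*Real.sin v^3*Real.cos v^5 + (33/2:ℝ)*Real.cos p*Real.sin v^3*Real.cos v^7 + (-15:ℝ)*Real.cos p*Real.sin v^5*Real.cos v + (-63:ℝ)*Real.cos p*Real.sin v^5*Real.cos v^3 + (105/2:ℝ)*Real.cos p*Real.sin v^5*Real.cos v^5 + (6:ℝ)*Real.cos p*Real.sin v^7*Real.cos v + (27/2:ℝ)*Real.cos p*Real.sin v^7*Real.cos v^3 + (-12:ℝ)*Real.cos p*Real.sin v^9*Real.cos v + (-27/2:ℝ)*Real.cos p^3*Real.sin v*Real.cos v^3 + (27:ℝ)*Real.cos p^3*Real.sin v*Real.cos v^7 + (27/2:ℝ)*Real.cos p^3*Real.sin v*Real.cos v^9 + (9/2:ℝ)*Real.cos p^3*Real.sin v^3*Real.cos v + (-54:ℝ)*Real.cos p^3*Real.sin v^3*Real.cos v^3 + (-171:ℝ)*Real.cos p^3*Real.sin v^3*Real.cos v^5 + (-18:ℝ)*Real.cos p^3*Real.sin v^3*Real.cos v^7 + (18:ℝ)*Real.cos p^3*Real.sin v^5*Real.cos v + (81:ℝ)*Real.cos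 p^3*Real.sin v^5*Real.cos v^3 + (-63:ℝ)*Real.cos p^3*Real.sin v^5*Real.cos v^5 + (-9:ℝ)*Real.cos p^3*Real.sin v^7*Real.cos v + (-18:ℝ)*Real.cos p^3*Real.sin v^7*Real.cos v^3 + (27/2:ℝ)*Real.cos p^3*Real.sin v^9*Real.cos v + (3/4:ℝ)*Real.sin p + (3/4:ℝ)*Real.sin p*Real.cos v^2 + (-3/4:ℝ)*Real.sin p*Real.cos v^4 + (-3/4:ℝ)*Real.sin p*Real.cos v^6 + (3/4:ℝ)*Real.sin p*Real.cos v^8 + (3/4:ℝ)*Real.sin p*Real.cos v^10 + (3/4:ℝ)*Real.sin p*Real.sin v^2 + (9/2:ℝ)*Real.sin p*Real.sin v^2*Real.cos v^2 + (-21/4:ℝ)*Real.sin p*Real.sin v^2*Real.cos v^4 + (-24:ℝ)*Real.sin p*Real.sin v^2*Real.cos v^6 + (-33/4:ℝ)*Real.sin p*Real.sin v^2*Real.cos v^8 + (3/4:ℝ)*Real.sin p*Real.sin v^4 + (51/4:ℝ)*Real.sin p*Real.sin v^4*Real.cos v^2 + (81/2:ℝ)*Real.sin p*Real.sin v^4*Real.cos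 v^4 + (-6:ℝ)*Real.sin p*Real.sin v^4*Real.cos v^6 + (-3/4:ℝ)*Real.sin p*Real.sin v^6 + (-6:ℝ)*Real.sin p*Real.sin v^6*Real.cos v^2 + (15:ℝ)*Real.sin p*Real.sin v^6*Real.cos v^4 + (3/4:ℝ)*Real.sin p*Real.sin v^8 + (45/4:ℝ)*Real.sin p*Real.sin v^8*Real.cos v^2 + (-3/4:ℝ)*Real.sin p*Real.sin v^10 + (-9/4:ℝ)*Real.sin p*Real.cos p^2 + (-9/4:ℝ)*Real.sin p*Real.cos p^2*Real.cos v^2 + (9/4:ℝ)*Real.sin p*Real.cos p^2*Real.cos v^4 + (9/4:ℝ)*Real.sin p*Real.cos p^2*Real.cos v^6 + (-9/4:ℝ)*Real.sin p*Real.cos p^2*Real.cos v^8 + (-9/4:ℝ)*Real.sin p*Real.cos p^2*Real.cos v^10 + (-9/4:ℝ)*Real.sin p*Real.cos p^2*Real.sin v^2 + (-18:ℝ)*Real.sin p*Real.cos p^2*Real.sin v^2*Real.cos v^2 + (99/4:ℝ)*Real.sin p*Real.cos p^2*Real.sin v^2*Real.cos v^4 + (99:ℝ)*Real.sin p*Real.cos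 p^2*Real.sin v^2*Real.cos v^6 + (117/4:ℝ)*Real.sin p*Real.cos p^2*Real.sin v^2*Real.cos v^8 + (-9/4:ℝ)*Real.sin p*Real.cos p^2*Real.sin v^4 + (-189/4:ℝ)*Real.sin p*Real.cos p^2*Real.sin v^4*Real.cos v^2 + (-315/2:ℝ)*Real.sin p*Real.cos p^2*Real.sin v^4*Real.cos v^4 + (63/2:ℝ)*Real.sin p*Real.cos p^2*Real.sin v^4*Real.cos v^6 + (9/4:ℝ)*Real.sin p*Real.cos p^2*Real.sin v^6 + (27:ℝ)*Real.sin p*Real.cos p^2*Real.sin v^6*Real.cos v^2 + (-63/2:ℝ)*Real.sin p*Real.cos p^2*Real.sin v^6*Real.cos v^4 + (-9/4:ℝ)*Real.sin p*Real.cos p^2*Real.sin v^8 + (-117/4:ℝ)*Real.sin p*Real.cos p^2*Real.sin v^8*Real.cos v^2 + (9/4:ℝ)*Real.sin p*Real.cos p^2*Real.sin v^10) * Real.sin_sq_add_cos_sq v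

lemma knot_mono (h a : ℝ) (hh : 0 < h) {j k : ℤ} (hjk : j ≤ k) : knot h a j ≤ knot h a k := by
  have hc : (j:ℝ) ≤ (k:ℝ) := by exact_mod_cast hjk
  simp only [knot]
  nlinarith

lemma rep (h a : ℝ) (hh : 0 < h) (i : ℤ) (x : ℝ) : CTB h a i x = Phi h a i x := by
  have eA : (x - knot h a (i-2))/2 = (x - knot h a i)/2 + (h/2 + h/2) := by
    simp only [knot]; push_cast; ring
  have eB : (x - knot h a (i-1))/2 = (x - knot h a i)/2 + h/2 := by
    simp only [knot]; push_cast; ring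
  have eC : (knot h a i - x)/2 = -((x - knot h a i)/2) := by ring
  have eD : (knot h a (i+1) - x)/2 = h/2 - (x - knot h a i)/2 := by
    simp only [knot]; push_cast; ring
  have eE : (knot h a (i+2) - x)/2 = h/2 + h/2 - (x - knot h a i)/2 := by
    simp only [knot]; push_cast; ring
  have eF : (x - knot h a (i+1))/2 = (x - knot h a i)/2 - h/2 := by
    simp only [knot]; push_cast; ring
  have eG : (x - knot h a (i+2))/2 = (x - knot h a i)/2 - (h/2 + h/2) := by
    simp only [knot]; push_cast; ring
  have ecA : cA h = -2 * Real.cos (h/2) - 2 * Real.cos (h/2+h/2+h/2) := by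
    rw [cA, show h/2+h/2+h/2 = 3*h/2 by ring]
  have ecB : cB h = 2 + 2 * Real.cos (h/2+h/2) + 2 * Real.cos (h/2+h/2+(h/2+h/2)) := by
    rw [cB, show h/2+h/2 = 2*h/2 by ring, show 2*h/2+2*h/2 = 2*h by ring,
      show (2:ℝ)*h/2 = h by ring]
  have km : ∀ j k : ℤ, j ≤ k → knot h a j ≤ knot h a k := fun j k hjk => knot_mono h a hh hjk
  simp only [CTB, Phi]
  split_ifs with h1 h2 h3 h4
  · rw [Gf_of_nonneg (by linarith [h1.1] : (0:ℝ) ≤ x - knot h a (i-2)),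
      Gf_of_nonpos (by linarith [h1.2] : x - knot h a (i-1) ≤ 0),
      Gf_of_nonpos (by linarith [h1.2, km (i-1) i (by omega)] : x - knot h a i ≤ 0),
      Gf_of_nonpos (by linarith [h1.2, km (i-1) (i+1) (by omega)] : x - knot h a (i+1) ≤ 0),
      Gf_of_nonpos (by linarith [h1.2, km (i-1) (i+2) (by omega)] : x - knot h a (i+2) ≤ 0)]
    ring
  · rw [Gf_of_nonneg (by linarith [h2.1, km (i-2) (i-1) (by omega)] : (0:ℝ) ≤ x - knot h a (i-2)),
      Gf_of_nonneg (by linarith [h2.1] : (0:ℝ) ≤ x - knot h a (i-1)),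
      Gf_of_nonpos (by linarith [h2.2] : x - knot h a i ≤ 0),
      Gf_of_nonpos (by linarith [h2.2, km i (i+1) (by omega)] : x - knot h a (i+1) ≤ 0),
      Gf_of_nonpos (by linarith [h2.2, km i (i+2) (by omega)] : x - knot h a (i+2) ≤ 0)]
    rw [eA, eB, eC, eD, eE, ecA]
    linear_combination (keyI2 ((x - knot h a i)/2) (h/2)) /
      (Real.sin (h / 2) * Real.sin h * Real.sin (3 * h / 2))
  · rw [Gf_of_nonneg (by linarith [h3.1, km (i-2) i (by omega)] : (0:ℝ) ≤ x - knot h a (i-2)),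
      Gf_of_nonneg (by linarith [h3.1, km (i-1) i (by omega)] : (0:ℝ) ≤ x - knot h a (i-1)),
      Gf_of_nonneg (by linarith [h3.1] : (0:ℝ) ≤ x - knot h a i),
      Gf_of_nonpos (by linarith [h3.2] : x - knot h a (i+1) ≤ 0),
      Gf_of_nonpos (by linarith [h3.2, km (i+1) (i+2) (by omega)] : x - knot h a (i+2) ≤ 0)]
    rw [eA, eB, eD, eE, ecA, ecB]
    linear_combination (keyI3 ((x - knot h a i)/2) (h/2)) /
      (Real.sin (h / 2) * Real.sin h * Real.sin (3 * h / 2))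
  · rw [Gf_of_nonneg (by linarith [h4.1, km (i-2) (i+1) (by omega)] : (0:ℝ) ≤ x - knot h a (i-2)),
      Gf_of_nonneg (by linarith [h4.1, km (i-1) (i+1) (by omega)] : (0:ℝ) ≤ x - knot h a (i-1)),
      Gf_of_nonneg (by linarith [h4.1, km i (i+1) (by omega)] : (0:ℝ) ≤ x - knot h a i),
      Gf_of_nonneg (by linarith [h4.1] : (0:ℝ) ≤ x - knot h a (i+1)),
      Gf_of_nonpos (by linarith [h4.2] : x - knot h a (i+2) ≤ 0)]
    rw [eA, eB, eE, eF, ecA, ecB]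
    linear_combination (keyI4 ((x - knot h a i)/2) (h/2)) /
      (Real.sin (h / 2) * Real.sin h * Real.sin (3 * h / 2))
  · rcases lt_or_ge x (knot h a (i-2)) with hl|hr
    · rw [Gf_of_nonpos (by linarith : x - knot h a (i-2) ≤ 0),
        Gf_of_nonpos (by linarith [km (i-2) (i-1) (by omega)] : x - knot h a (i-1) ≤ 0),
        Gf_of_nonpos (by linarith [km (i-2) i (by omega)] : x - knot h a i ≤ 0),
        Gf_of_nonpos (by linarith [km (i-2) (i+1) (by omega)] : x - knot h a (i+1) ≤ 0),
        Gf_of_nonpos (by linarith [km (i-2) (i+2) (by omega)] : x - knot h a (i+2) ≤ 0)]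
      simp
    · push_neg at h1 h2 h3 h4
      have s1 : knot h a (i-1) < x := h1 hr
      have s2 : knot h a i < x := h2 s1.le
      have s3 : knot h a (i+1) < x := h3 s2.le
      have s4 : knot h a (i+2) < x := h4 s3.le
      rw [Gf_of_nonneg (by linarith : (0:ℝ) ≤ x - knot h a (i-2)),
        Gf_of_nonneg (by linarith : (0:ℝ) ≤ x - knot h a (i-1)),
        Gf_of_nonneg (by linarith : (0:ℝ) ≤ x - knot h a i),
        Gf_of_nonneg (by linarith : (0:ℝ) ≤ x - knot h a (i+1)),
        Gf_of_nonneg (by linarith : (0:ℝ) ≤ x - knot h a (i+2))]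
      rw [eA, eB, eF, eG, ecA, ecB]
      linear_combination (-(keyI5 ((x - knot h a i)/2) (h/2))) /
        (Real.sin (h / 2) * Real.sin h * Real.sin (3 * h / 2))

end SplineAux

open SplineAux in
/-- The spline expansion `U_N = Σ_{i=−1}^{N+1} δ_i·CTB_i` is twice differentiable and
`U_N''(x_m) = γ₁δ_{m−1} + γ₂δ_m + γ₁δ_{m+1}` with
`γ₁ = 3(1+3cos h)csc²(h/2)/(16(2cos(h/2)+cos(3h/2)))`,
`γ₂ = −3cot²(h/2)/(2+4cos h)`, for `0 ≤ m ≤ N`. -/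
theorem spline_expansion_nodal_second_deriv (h a : ℝ) (hh : 0 < h) (hh' : h < 2 * Real.pi / 3)
    (N : ℕ) (hN : 1 ≤ N) (δ : ℤ → ℝ) (U : ℝ → ℝ)
    (hU : U = fun x => ∑ i ∈ Finset.Icc (-1 : ℤ) ((N : ℤ) + 1), δ i * CTB h a i x) :
    Differentiable ℝ U ∧ Differentiable ℝ (deriv U) ∧
    ∀ m : ℤ, 0 ≤ m → m ≤ (N : ℤ) →
      deriv (deriv U) (knot h a m) =
        (3 * (1 + 3 * Real.cos h) * ((Real.sin (h / 2))⁻¹) ^ 2 /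
          (16 * (2 * Real.cos (h / 2) + Real.cos (3 * h / 2)))) * δ (m - 1) +
        (-3 * (Real.cos (h / 2) / Real.sin (h / 2)) ^ 2 / (2 + 4 * Real.cos h)) * δ m +
        (3 * (1 + 3 * Real.cos h) * ((Real.sin (h / 2))⁻¹) ^ 2 /
          (16 * (2 * Real.cos (h / 2) + Real.cos (3 * h / 2)))) * δ (m + 1) := by
  have hπ := Real.pi_gt_three
  -- basic positivity facts
  have hv0 : 0 < h/2 := by linarith
  have hvlt : h/2 < Real.pi/3 := by linarith
  have hsv : 0 < Real.sin (h/2) :=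
    Real.sin_pos_of_pos_of_lt_pi hv0 (by linarith)
  have hsh : 0 < Real.sin h :=
    Real.sin_pos_of_pos_of_lt_pi hh (by linarith)
  have hs3 : 0 < Real.sin (3*h/2) :=
    Real.sin_pos_of_pos_of_lt_pi (by linarith) (by linarith)
  have hcv : 1/2 < Real.cos (h/2) := by
    have := Real.cos_lt_cos_of_nonneg_of_le_pi (le_of_lt hv0) (by linarith) hvlt
    rwa [Real.cos_pi_div_three] at this
  have hθ : Real.sin (h / 2) * Real.sin h * Real.sin (3 * h / 2) ≠ 0 := by positivity
  -- multiple-angle rewrites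
  have esh : Real.sin h = 2 * Real.sin (h/2) * Real.cos (h/2) := by
    have := Real.sin_two_mul (h/2)
    rwa [show 2*(h/2) = h by ring] at this
  have ech : Real.cos h = 2 * Real.cos (h/2) ^ 2 - 1 := by
    have := Real.cos_two_mul (h/2)
    rwa [show 2*(h/2) = h by ring] at this
  have es3 : Real.sin (3*h/2) = 3 * Real.sin (h/2) - 4 * Real.sin (h/2) ^ 3 := by
    have := Real.sin_three_mul (h/2)
    rwa [show 3*(h/2) = 3*h/2 by ring] at this
  have ec3 : Real.cos (3*h/2) = 4 * Real.cos (h/2) ^ 3 - 3 * Real.cos (h/2) := by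
    have := Real.cos_three_mul (h/2)
    rwa [show 3*(h/2) = 3*h/2 by ring] at this
  have ec2h : Real.cos (2*h) = 2 * Real.cos h ^ 2 - 1 := Real.cos_two_mul h
  -- the spline expansion in terms of Phi
  have hU' : U = fun x => ∑ i ∈ Finset.Icc (-1 : ℤ) ((N : ℤ) + 1), δ i * Phi h a i x := by
    rw [hU]
    funext x
    refine Finset.sum_congr rfl fun i _ => ?_
    rw [rep h a hh i x]
  have hDU : ∀ x : ℝ, HasDerivAt U
      (∑ i ∈ Finset.Icc (-1 : ℤ) ((N : ℤ) + 1), δ i * Phi1 h a i x) x := by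
    intro x
    rw [hU']
    exact HasDerivAt.fun_sum fun i _ => (Phi_hasDeriv h a i x).const_mul (δ i)
  have hdiffU : Differentiable ℝ U := fun x => (hDU x).differentiableAt
  have hderivU : deriv U = fun x => ∑ i ∈ Finset.Icc (-1 : ℤ) ((N : ℤ) + 1), δ i * Phi1 h a i x :=
    funext fun x => (hDU x).deriv
  have hDV : ∀ x : ℝ, HasDerivAt (fun x => ∑ i ∈ Finset.Icc (-1 : ℤ) ((N : ℤ) + 1),
      δ i * Phi1 h a i x)
      (∑ i ∈ Finset.Icc (-1 : ℤ) ((N : ℤ) + 1), δ i * Phi2 h a i x) x := by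
    intro x
    exact HasDerivAt.fun_sum fun i _ => (Phi1_hasDeriv h a i x).const_mul (δ i)
  refine ⟨hdiffU, by rw [hderivU]; exact fun x => (hDV x).differentiableAt, ?_⟩
  intro m hm0 hmN
  set γ₁ : ℝ := 3 * (1 + 3 * Real.cos h) * ((Real.sin (h / 2))⁻¹) ^ 2 /
      (16 * (2 * Real.cos (h / 2) + Real.cos (3 * h / 2))) with hγ₁
  set γ₂ : ℝ := -3 * (Real.cos (h / 2) / Real.sin (h / 2)) ^ 2 / (2 + 4 * Real.cos h) with hγ₂
  -- knot differences
  have harg : ∀ j : ℤ, knot h a m - knot h a j = ((m - j : ℤ) : ℝ) * h := by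
    intro j; simp only [knot]; push_cast; ring
  have hc0 : 0 < Real.cos (h/2) := by linarith
  have h4c : 0 < 4 * Real.cos (h/2) ^ 2 - 1 := by nlinarith
  have hDs1 : (16 * (2 * Real.cos (h / 2) + Real.cos (3 * h / 2))) * Real.sin (h/2) ^ 2 ≠ 0 := by
    rw [ec3]
    have hint := mul_pos (mul_pos hc0 h4c) (mul_pos hsv hsv)
    nlinarith [hint]
  have hDs2 : (2 + 4 * Real.cos h) * Real.sin (h/2) ^ 2 ≠ 0 := by
    rw [ech]
    have hint := mul_pos h4c (mul_pos hsv hsv)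
    nlinarith [hint]
  have hsne : Real.sin (h/2) ≠ 0 := ne_of_gt hsv
  have hD1 : (16 * (2 * Real.cos (h / 2) + Real.cos (3 * h / 2))) ≠ 0 := by
    rw [ec3]
    nlinarith [mul_pos hc0 h4c]
  have hD2 : (2 + 4 * Real.cos h) ≠ 0 := by
    rw [ech]
    nlinarith [h4c]
  have hγ₁' : γ₁ = (3 * (1 + 3 * Real.cos h)) /
      ((16 * (2 * Real.cos (h / 2) + Real.cos (3 * h / 2))) * Real.sin (h/2) ^ 2) := by
    rw [hγ₁, inv_pow, ← div_eq_mul_inv, div_div,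
      mul_comm (Real.sin (h/2) ^ 2) (16 * (2 * Real.cos (h / 2) + Real.cos (3 * h / 2)))]
  have hγ₂' : γ₂ = (-3 * Real.cos (h/2) ^ 2) /
      ((2 + 4 * Real.cos h) * Real.sin (h/2) ^ 2) := by
    rw [hγ₂, div_pow, ← mul_div_assoc, div_div,
      mul_comm (Real.sin (h/2) ^ 2) (2 + 4 * Real.cos h)]
  -- value of Phi2 at the node
  have hval : ∀ i : ℤ, Phi2 h a i (knot h a m) =
      if i = m - 1 then γ₁ else if i = m then γ₂ else if i = m + 1 then γ₁ else 0 := by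
    intro i
    unfold Phi2
    rw [show knot h a m - knot h a (i-2) = ((m - (i-2) : ℤ) : ℝ) * h from harg _,
      show knot h a m - knot h a (i-1) = ((m - (i-1) : ℤ) : ℝ) * h from harg _,
      show knot h a m - knot h a i = ((m - i : ℤ) : ℝ) * h from harg _,
      show knot h a m - knot h a (i+1) = ((m - (i+1) : ℤ) : ℝ) * h from harg _,
      show knot h a m - knot h a (i+2) = ((m - (i+2) : ℤ) : ℝ) * h from harg _]
    rcases eq_or_ne i (m-1) with rfl|hi1
    · rw [if_pos rfl]
      rw [show ((m - (m-1-2) : ℤ) : ℝ) * h = 3*h by push_cast; ring,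
        show ((m - (m-1-1) : ℤ) : ℝ) * h = 2*h by push_cast; ring,
        show ((m - (m-1) : ℤ) : ℝ) * h = h by push_cast; ring,
        show ((m - (m-1+1) : ℤ) : ℝ) * h = 0 by push_cast; ring,
        show ((m - (m-1+2) : ℤ) : ℝ) * h = -h by push_cast; ring]
      rw [Gf2_of_nonneg (by linarith : (0:ℝ) ≤ 3*h),
        Gf2_of_nonneg (by linarith : (0:ℝ) ≤ 2*h),
        Gf2_of_nonneg hh.le,
        Gf2_of_nonpos le_rfl,
        Gf2_of_nonpos (by linarith : -h ≤ 0)]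
      rw [hγ₁', div_eq_div_iff hθ hDs1]
      rw [cA, cB]
      rw [show (3*h)/2 = 3*(h/2) by ring, show (2*h)/2 = h by ring]
      rw [Real.sin_three_mul, Real.cos_three_mul]
      rw [ec2h, esh, ech]
      linear_combination ((-36:ℝ)*Real.sin (h/2)^3*Real.cos (h/2) + (960:ℝ)*Real.sin (h/2)^3*Real.cos (h/2)^3 + (-5760:ℝ)*Real.sin (h/2)^3*Real.cos (h/2)^5 + (10752:ℝ)*Real.sin (h/2)^3*Real.cos (h/2)^7 + (-6144:ℝ)*Real.sin (h/2)^3*Real.cos (h/2)^9 + (-336:ℝ)*Real.sin (h/2)^5*Real.cos (h/2) + (1152:ℝ)*Real.sin (h/2)^5*Real.cos (h/2)^3 + (3072:ℝ)*Real.sin (h/2)^5*Real.cos (h/2)^7 + (960:ℝ)*Real.sin (h/2)^7*Real.cos (h/2) + (-3072:ℝ)*Real.sin (h/2)^7*Real.cos (h/2)^3 + (-3072:ℝ)*Real.sin (h/2)^7*Real.cos (h/2)^5 + (-768:ℝ)*Real.sin (h/2)^9*Real.cos (h/2) + (3072:ℝ)*Real.sin (h/2)^9*Real.cos (h/2)^3)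 * Real.sin_sq_add_cos_sq (h/2)
    rcases eq_or_ne i m with hEq|hi2
    · rw [hEq]
      rw [if_neg (by omega), if_pos rfl]
      rw [show ((m - (m-2) : ℤ) : ℝ) * h = 2*h by push_cast; ring,
        show ((m - (m-1) : ℤ) : ℝ) * h = h by push_cast; ring,
        show ((m - m : ℤ) : ℝ) * h = 0 by push_cast; ring,
        show ((m - (m+1) : ℤ) : ℝ) * h = -h by push_cast; ring,
        show ((m - (m+2) : ℤ) : ℝ) * h = -(2*h) by push_cast; ring]
      rw [Gf2_of_nonneg (by linarith : (0:ℝ) ≤ 2*h),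
        Gf2_of_nonneg hh.le,
        Gf2_of_nonpos le_rfl,
        Gf2_of_nonpos (by linarith : -h ≤ 0),
        Gf2_of_nonpos (by linarith : -(2*h) ≤ 0)]
      rw [hγ₂', div_eq_div_iff hθ hDs2]
      rw [cA, show (2*h)/2 = h by ring, esh, es3, ec3, ech]
      linear_combination ((6:ℝ)*Real.sin (h/2)^3*Real.cos (h/2) + (-48:ℝ)*Real.sin (h/2)^3*Real.cos (h/2)^3) * Real.sin_sq_add_cos_sq (h/2)
    rcases eq_or_ne i (m+1) with hEq|hi3
    · rw [hEq]
      rw [if_neg (by omega), if_neg (by omega), if_pos rfl]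
      rw [show ((m - (m+1-2) : ℤ) : ℝ) * h = h by push_cast; ring,
        show ((m - (m+1-1) : ℤ) : ℝ) * h = 0 by push_cast; ring,
        show ((m - (m+1) : ℤ) : ℝ) * h = -h by push_cast; ring,
        show ((m - (m+1+1) : ℤ) : ℝ) * h = -(2*h) by push_cast; ring,
        show ((m - (m+1+2) : ℤ) : ℝ) * h = -(3*h) by push_cast; ring]
      rw [Gf2_of_nonneg hh.le,
        Gf2_of_nonpos le_rfl,
        Gf2_of_nonpos (by linarith : -h ≤ 0),
        Gf2_of_nonpos (by linarith : -(2*h) ≤ 0),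
        Gf2_of_nonpos (by linarith : -(3*h) ≤ 0)]
      rw [hγ₁', div_eq_div_iff hθ hDs1]
      rw [esh, es3, ec3, ech]
      linear_combination ((-36:ℝ)*Real.sin (h/2)^3*Real.cos (h/2) + (96:ℝ)*Real.sin (h/2)^3*Real.cos (h/2)^3) * Real.sin_sq_add_cos_sq (h/2)
    rw [if_neg (by omega), if_neg (by omega), if_neg (by omega)]
    rcases le_or_gt i (m-2) with hfar|hnear
    · -- far left: all offsets nonnegative, use keyTF
      have o1 : (0:ℤ) ≤ m - (i-2) := by omega
      have o2 : (0:ℤ) ≤ m - (i-1) := by omega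
      have o3 : (0:ℤ) ≤ m - i := by omega
      have o4 : (0:ℤ) ≤ m - (i+1) := by omega
      have o5 : (0:ℤ) ≤ m - (i+2) := by omega
      have c1 : (0:ℝ) ≤ ((m - (i-2) : ℤ) : ℝ) * h :=
        mul_nonneg (by exact_mod_cast o1) hh.le
      have c2 : (0:ℝ) ≤ ((m - (i-1) : ℤ) : ℝ) * h :=
        mul_nonneg (by exact_mod_cast o2) hh.le
      have c3 : (0:ℝ) ≤ ((m - i : ℤ) : ℝ) * h :=
        mul_nonneg (by exact_mod_cast o3) hh.le
      have c4 : (0:ℝ) ≤ ((m - (i+1) : ℤ) : ℝ) * h :=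
        mul_nonneg (by exact_mod_cast o4) hh.le
      have c5 : (0:ℝ) ≤ ((m - (i+2) : ℤ) : ℝ) * h :=
        mul_nonneg (by exact_mod_cast o5) hh.le
      rw [Gf2_of_nonneg c1, Gf2_of_nonneg c2, Gf2_of_nonneg c3, Gf2_of_nonneg c4,
        Gf2_of_nonneg c5]
      rw [show (((m - (i-1) : ℤ) : ℝ) * h)/2 = (((m - (i-2) : ℤ) : ℝ) * h)/2 - h/2 by
          push_cast; ring,
        show (((m - i : ℤ) : ℝ) * h)/2 = (((m - (i-2) : ℤ) : ℝ) * h)/2 - (h/2+h/2) by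
          push_cast; ring,
        show (((m - (i+1) : ℤ) : ℝ) * h)/2 = (((m - (i-2) : ℤ) : ℝ) * h)/2 - (h/2+h/2+h/2) by
          push_cast; ring,
        show (((m - (i+2) : ℤ) : ℝ) * h)/2
            = (((m - (i-2) : ℤ) : ℝ) * h)/2 - (h/2+h/2+(h/2+h/2)) by push_cast; ring]
      rw [cA, cB,
        show Real.cos (3*h/2) = Real.cos (h/2+h/2+h/2) by rw [show h/2+h/2+h/2 = 3*h/2 by ring],
        show Real.cos h = Real.cos (h/2+h/2) by rw [show h/2+h/2 = h by ring],
        show Real.cos (2*h) = Real.cos (h/2+h/2+(h/2+h/2)) by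
          rw [show h/2+h/2+(h/2+h/2) = 2*h by ring]]
      rw [show (((m - (i-2) : ℤ) : ℝ) * h)/2 = ((m - (i-2) : ℤ) : ℝ) * h/2 by ring]
      rw [div_eq_zero_iff]
      left
      linear_combination keyTF (((m - (i-2) : ℤ) : ℝ) * h/2) (h/2)
    · -- far right: i ≥ m+2, all offsets nonpositive
      have c1 : ((m - (i-2) : ℤ) : ℝ) * h ≤ 0 :=
        mul_nonpos_of_nonpos_of_nonneg (by exact_mod_cast (by omega : (m - (i-2) : ℤ) ≤ 0)) hh.le
      have c2 : ((m - (i-1) : ℤ) : ℝ) * h ≤ 0 :=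
        mul_nonpos_of_nonpos_of_nonneg (by exact_mod_cast (by omega : (m - (i-1) : ℤ) ≤ 0)) hh.le
      have c3 : ((m - i : ℤ) : ℝ) * h ≤ 0 :=
        mul_nonpos_of_nonpos_of_nonneg (by exact_mod_cast (by omega : (m - i : ℤ) ≤ 0)) hh.le
      have c4 : ((m - (i+1) : ℤ) : ℝ) * h ≤ 0 :=
        mul_nonpos_of_nonpos_of_nonneg (by exact_mod_cast (by omega : (m - (i+1) : ℤ) ≤ 0)) hh.le
      have c5 : ((m - (i+2) : ℤ) : ℝ) * h ≤ 0 :=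
        mul_nonpos_of_nonpos_of_nonneg (by exact_mod_cast (by omega : (m - (i+2) : ℤ) ≤ 0)) hh.le
      rw [Gf2_of_nonpos c1, Gf2_of_nonpos c2, Gf2_of_nonpos c3, Gf2_of_nonpos c4,
        Gf2_of_nonpos c5]
      simp
  -- assemble the sum
  rw [hderivU]
  rw [(hDV (knot h a m)).deriv]
  have hsub : Finset.Icc (m-1) (m+1) ⊆ Finset.Icc (-1 : ℤ) ((N : ℤ) + 1) := by
    intro j hj
    simp only [Finset.mem_Icc] at hj ⊢
    omega
  rw [← Finset.sum_subset hsub (by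
    intro j hjbig hjsmall
    simp only [Finset.mem_Icc] at hjsmall
    rw [hval j, if_neg (by omega), if_neg (by omega), if_neg (by omega), mul_zero])]
  have hset : Finset.Icc (m-1) (m+1) = {m-1, m, m+1} := by
    ext j
    simp only [Finset.mem_Icc, Finset.mem_insert, Finset.mem_singleton]
    omega
  rw [hset]
  rw [Finset.sum_insert (by simp only [Finset.mem_insert, Finset.mem_singleton]; omega),
    Finset.sum_insert (by simp only [Finset.mem_singleton]; omega), Finset.sum_singleton]
  rw [hval (m-1), hval m, hval (m+1)]
  rw [if_pos rfl, if_neg (by omega), if_pos rfl, if_neg (by omega), if_neg (by omega),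
    if_pos rfl]
  ring
end
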